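/- arXiv:2107.03221 — 6 statements merged into one kernel-verified Lean document; each statement's English description precedes it below -/
import Mathlib

section
/- Let ξ:{α+β}→ℂ∖{0} be a map. A linear form λ∈𝔫* belongs to the coadjoint orbit Ω_{{α+β},ξ} if and only if λ_{α+β}=ξ(α+β) and λ_{2α+β}=λ_{3α+β}=λ_{3α+2β}=0 (with λ_α and λ_β arbitrary). -/
open scoped RealInnerProductSpace

/-- The exponential of a (nilpotent) endomorphism, as a finite sum. -/
noncomputable def expNil {M : Type*} [AddCommGroup M] [Module ℂ M] (A : Module.End ℂ M) :
    Module.End ℂ M :=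
  ∑ k ∈ Finset.range (nilpotencyClass A), (k.factorial : ℂ)⁻¹ • A ^ k

/-- The coadjoint orbit `Ω_{D,ξ}` of the linear form `f_{D,ξ} = ∑_{γ∈D} ξ(γ) e_γ*`,
consisting of all `f_{D,ξ} ∘ exp(−ad x)`, `x ∈ 𝔫`.  Roots are encoded by indices. -/
noncomputable def coadjointOrbit {ι : Type*} {n : Type*} [LieRing n] [LieAlgebra ℂ n]
    (e : Module.Basis ι ℂ n) (D : Finset ι) (ξ : ι → ℂ) :
    Set (Module.Dual ℂ n) :=
  {lam | ∃ x : n, lam = (∑ i ∈ D, ξ i • e.coord i).comp (expNil (-(LieAlgebra.ad ℂ n x)))}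

/-- The basic subvariety `𝒪_{D,ξ} = Σ_{γ∈D} Ω_{{γ},ξ|{γ}}`. -/
noncomputable def basicSubvariety {ι : Type*} [DecidableEq ι] {n : Type*} [LieRing n] [LieAlgebra ℂ n]
    (e : Module.Basis ι ℂ n) (D : Finset ι) (ξ : ι → ℂ) :
    Set (Module.Dual ℂ n) :=
  {lam | ∃ μ : ι → Module.Dual ℂ n,
    (∀ i ∈ D, μ i ∈ coadjointOrbit e {i} ξ) ∧ lam = ∑ i ∈ D, μ i}

lemma expNil_dual_apply {M : Type*} [AddCommGroup M] [Module ℂ M]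
    (A : Module.End ℂ M) (hA : IsNilpotent A) (g : Module.Dual ℂ M) (y : M)
    (hg : ∀ k, 2 ≤ k → g ((A ^ k) y) = 0) :
    g (expNil A y) = g y + g (A y) := by
  have hpow := pow_nilpotencyClass hA
  unfold expNil
  rw [LinearMap.sum_apply, map_sum]
  simp only [LinearMap.smul_apply, map_smul]
  rcases Nat.lt_or_ge (nilpotencyClass A) 2 with h2 | h2
  · interval_cases h : nilpotencyClass A
    · have h10 : (1 : Module.End ℂ M) = 0 := by simpa [h] using hpow
      have hy : y = 0 := by
        have := LinearMap.congr_fun h10 y; simpa using this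
      simp [hy]
    · have hA0 : A = 0 := by simpa [h] using hpow
      simp [hA0]
  · rw [← Finset.sum_subset (s₁ := ({0, 1} : Finset ℕ))
      (by intro k hk; simp only [Finset.mem_insert, Finset.mem_singleton] at hk
          rcases hk with rfl | rfl <;> simp [Finset.mem_range] <;> omega)
      (by intro k hk hk'
          simp only [Finset.mem_insert, Finset.mem_singleton] at hk'
          rw [hg k (by omega)]
          simp)]
    rw [Finset.sum_pair (by norm_num)]
    simp [Nat.factorial]

theorem stmt1 {n : Type*} [LieRing n] [LieAlgebra ℂ n]
    (α β : EuclideanSpace ℝ (Fin 2))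
    (hαα : ⟪α, α⟫ = 1) (hββ : ⟪β, β⟫ = 3) (hαβ : ⟪α, β⟫ = -(3/2))
    -- the six positive roots of `G₂`: `α, β, α+β, 2α+β, 3α+β, 3α+2β`, indexed by `Fin 6`
    (root : Fin 6 → EuclideanSpace ℝ (Fin 2))
    (hroot : root = ![α, β, α + β, (2:ℝ) • α + β, (3:ℝ) • α + β, (3:ℝ) • α + (2:ℝ) • β])
    (c₁ c₂ c₃ c₄ c₅ : ℂ)
    (hc₁ : c₁ ≠ 0) (hc₂ : c₂ ≠ 0) (hc₃ : c₃ ≠ 0) (hc₄ : c₄ ≠ 0) (hc₅ : c₅ ≠ 0)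
    (e : Module.Basis (Fin 6) ℂ n)
    (h01 : ⁅e 0, e 1⁆ = c₁ • e 2)
    (h02 : ⁅e 0, e 2⁆ = c₂ • e 3)
    (h03 : ⁅e 0, e 3⁆ = c₃ • e 4)
    (h41 : ⁅e 4, e 1⁆ = c₄ • e 5)
    (h23 : ⁅e 2, e 3⁆ = c₅ • e 5)
    (h0 : ∀ i j : Fin 6, root i + root j ∉ Set.range root → ⁅e i, e j⁆ = 0)
    (hnil : ∀ x : n, IsNilpotent (LieAlgebra.ad ℂ n x))
    (ξ : Fin 6 → ℂ) (hξ : ξ 2 ≠ 0)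
    (lam : Module.Dual ℂ n) :
    lam ∈ coadjointOrbit e {2} ξ ↔
      (lam (e 2) = ξ 2 ∧ lam (e 3) = 0 ∧ lam (e 4) = 0 ∧ lam (e 5) = 0) := by
  -- root values
  have r0 : root 0 = α := by rw [hroot]; rfl
  have r1 : root 1 = β := by rw [hroot]; rfl
  have r2 : root 2 = α + β := by rw [hroot]; rfl
  have r3 : root 3 = (2:ℝ) • α + β := by rw [hroot]; rfl
  have r4 : root 4 = (3:ℝ) • α + β := by rw [hroot]; rfl
  have r5 : root 5 = (3:ℝ) • α + (2:ℝ) • β := by rw [hroot]; rfl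
  -- linear independence
  have hβα : ⟪β, α⟫ = -(3/2) := by rw [real_inner_comm]; exact hαβ
  have inde : ∀ a b : ℝ, a • α + b • β = 0 → a = 0 ∧ b = 0 := by
    intro a b h
    have h1 : ⟪a • α + b • β, α⟫ = 0 := by rw [h]; simp
    have h2 : ⟪a • α + b • β, β⟫ = 0 := by rw [h]; simp
    rw [inner_add_left, real_inner_smul_left, real_inner_smul_left, hαα, hβα] at h1
    rw [inner_add_left, real_inner_smul_left, real_inner_smul_left, hββ, hαβ] at h2
    constructor <;> linarith
  have step : ∀ (v : EuclideanSpace ℝ (Fin 2)) (p q : ℝ), v = p • α + q • β →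
      ∀ a b : ℝ, v = a • α + b • β → a = p ∧ b = q := by
    intro v p q hv a b hab
    have h := inde (a - p) (b - q) (by
      rw [show (a - p) • α + (b - q) • β = (a • α + b • β) - (p • α + q • β) by module,
        ← hab, ← hv, sub_self])
    exact ⟨by linarith [h.1], by linarith [h.2]⟩
  have hnr : ∀ a b : ℝ, a • α + b • β ∈ Set.range root →
      (a = 1 ∧ b = 0) ∨ (a = 0 ∧ b = 1) ∨ (a = 1 ∧ b = 1) ∨ (a = 2 ∧ b = 1) ∨
      (a = 3 ∧ b = 1) ∨ (a = 3 ∧ b = 2) := by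
    rintro a b ⟨j, hj⟩
    fin_cases j <;>
      simp only [Fin.zero_eta, Fin.mk_one, Fin.reduceFinMk] at hj
    · rw [r0] at hj; exact Or.inl (step α 1 0 (by module) a b hj)
    · rw [r1] at hj; exact Or.inr (Or.inl (step β 0 1 (by module) a b hj))
    · rw [r2] at hj; exact Or.inr (Or.inr (Or.inl (step _ 1 1 (by module) a b hj)))
    · rw [r3] at hj; exact Or.inr (Or.inr (Or.inr (Or.inl (step _ 2 1 (by module) a b hj))))
    · rw [r4] at hj; exact Or.inr (Or.inr (Or.inr (Or.inr (Or.inl (step _ 3 1 (by module) a b hj)))))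
    · rw [r5] at hj; exact Or.inr (Or.inr (Or.inr (Or.inr (Or.inr (step _ 3 2 (by module) a b hj)))))
  have mkzero : ∀ (i j : Fin 6) (a b : ℝ), root i + root j = a • α + b • β →
      ¬((a = 1 ∧ b = 0) ∨ (a = 0 ∧ b = 1) ∨ (a = 1 ∧ b = 1) ∨ (a = 2 ∧ b = 1) ∨
        (a = 3 ∧ b = 1) ∨ (a = 3 ∧ b = 2)) → ⁅e i, e j⁆ = 0 := by
    intro i j a b hs hn
    exact h0 i j (fun hm => hn (hnr a b (hs ▸ hm)))
  -- the zero brackets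
  have z04 : ⁅e 0, e 4⁆ = 0 := mkzero 0 4 4 1 (by rw [r0, r4]; module) (by norm_num)
  have z40 : ⁅e 4, e 0⁆ = 0 := mkzero 4 0 4 1 (by rw [r0, r4]; module) (by norm_num)
  have z05 : ⁅e 0, e 5⁆ = 0 := mkzero 0 5 4 2 (by rw [r0, r5]; module) (by norm_num)
  have z50 : ⁅e 5, e 0⁆ = 0 := mkzero 5 0 4 2 (by rw [r0, r5]; module) (by norm_num)
  have z12 : ⁅e 1, e 2⁆ = 0 := mkzero 1 2 1 2 (by rw [r1, r2]; module) (by norm_num)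
  have z21 : ⁅e 2, e 1⁆ = 0 := mkzero 2 1 1 2 (by rw [r1, r2]; module) (by norm_num)
  have z13 : ⁅e 1, e 3⁆ = 0 := mkzero 1 3 2 2 (by rw [r1, r3]; module) (by norm_num)
  have z31 : ⁅e 3, e 1⁆ = 0 := mkzero 3 1 2 2 (by rw [r1, r3]; module) (by norm_num)
  have z15 : ⁅e 1, e 5⁆ = 0 := mkzero 1 5 3 3 (by rw [r1, r5]; module) (by norm_num)
  have z51 : ⁅e 5, e 1⁆ = 0 := mkzero 5 1 3 3 (by rw [r1, r5]; module) (by norm_num)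
  have z24 : ⁅e 2, e 4⁆ = 0 := mkzero 2 4 4 2 (by rw [r2, r4]; module) (by norm_num)
  have z42 : ⁅e 4, e 2⁆ = 0 := mkzero 4 2 4 2 (by rw [r2, r4]; module) (by norm_num)
  have z25 : ⁅e 2, e 5⁆ = 0 := mkzero 2 5 4 3 (by rw [r2, r5]; module) (by norm_num)
  have z52 : ⁅e 5, e 2⁆ = 0 := mkzero 5 2 4 3 (by rw [r2, r5]; module) (by norm_num)
  have z34 : ⁅e 3, e 4⁆ = 0 := mkzero 3 4 5 2 (by rw [r3, r4]; module) (by norm_num)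
  have z43 : ⁅e 4, e 3⁆ = 0 := mkzero 4 3 5 2 (by rw [r3, r4]; module) (by norm_num)
  have z35 : ⁅e 3, e 5⁆ = 0 := mkzero 3 5 5 3 (by rw [r3, r5]; module) (by norm_num)
  have z53 : ⁅e 5, e 3⁆ = 0 := mkzero 5 3 5 3 (by rw [r3, r5]; module) (by norm_num)
  have z45 : ⁅e 4, e 5⁆ = 0 := mkzero 4 5 6 3 (by rw [r4, r5]; module) (by norm_num)
  have z54 : ⁅e 5, e 4⁆ = 0 := mkzero 5 4 6 3 (by rw [r4, r5]; module) (by norm_num)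
  -- skew versions of the nonzero brackets
  have skew : ∀ (x y : n) (c : ℂ) (z : n), ⁅x, y⁆ = c • z → ⁅y, x⁆ = (-c) • z := by
    intro x y c z h
    rw [← lie_skew, h, neg_smul]
  have h10 : ⁅e 1, e 0⁆ = (-c₁) • e 2 := skew _ _ _ _ h01
  have h20 : ⁅e 2, e 0⁆ = (-c₂) • e 3 := skew _ _ _ _ h02
  have h30 : ⁅e 3, e 0⁆ = (-c₃) • e 4 := skew _ _ _ _ h03
  have h14 : ⁅e 1, e 4⁆ = (-c₄) • e 5 := skew _ _ _ _ h41
  have h32 : ⁅e 3, e 2⁆ = (-c₅) • e 5 := skew _ _ _ _ h23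
  -- submodules
  set V2 : Submodule ℂ n := Submodule.span ℂ {e 2, e 3, e 4, e 5} with hV2def
  set V' : Submodule ℂ n := Submodule.span ℂ {e 3, e 4, e 5} with hV'def
  have hV'V2 : V' ≤ V2 := Submodule.span_mono (Set.subset_insert _ _)
  have m2 : e 2 ∈ V2 := Submodule.subset_span (by simp)
  have m3 : e 3 ∈ V' := Submodule.subset_span (by simp)
  have m4 : e 4 ∈ V' := Submodule.subset_span (by simp)
  have m5 : e 5 ∈ V' := Submodule.subset_span (by simp)
  -- bracket tables
  have bV2 : ∀ i j : Fin 6, ⁅e i, e j⁆ ∈ V2 := by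
    intro i j
    fin_cases i <;> fin_cases j <;>
      simp only [Fin.zero_eta, Fin.mk_one, Fin.reduceFinMk, Fin.isValue, lie_self, h01, h02, h03, h10, h20, h30, h14, h41, h23, h32,
        z04, z40, z05, z50, z12, z21, z13, z31, z15, z51, z24, z42, z25, z52, z34, z43,
        z35, z53, z45, z54] <;>
      first
        | exact zero_mem V2
        | exact Submodule.smul_mem _ _ (Submodule.subset_span (by simp))
  have bV' : ∀ (i : Fin 6) (z : n), z ∈ ({e 2, e 3, e 4, e 5} : Set n) → ⁅e i, z⁆ ∈ V' := by
    intro i z hz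
    simp only [Set.mem_insert_iff, Set.mem_singleton_iff] at hz
    rcases hz with rfl | rfl | rfl | rfl <;> fin_cases i <;>
      simp only [Fin.zero_eta, Fin.mk_one, Fin.reduceFinMk, Fin.isValue, lie_self, h02, h03, h20, h30, h23, h32, h14, h41,
        z12, z21, z13, z31, z24, z42, z25, z52, z34, z43, z35, z53, z45, z54, z15, z51,
        z04, z40, z05, z50] <;>
      first
        | exact zero_mem V'
        | exact Submodule.smul_mem _ _ (Submodule.subset_span (by simp))
  -- expansion of brackets along the basis
  have expandGen : ∀ (L : n →ₗ[ℂ] n) (x : n), L x = ∑ i, e.repr x i • L (e i) := by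
    intro L x
    conv_lhs => rw [← e.sum_repr x]
    rw [map_sum]
    simp only [map_smul]
  have expandL : ∀ x y : n, ⁅x, y⁆ = ∑ i, e.repr x i • ⁅e i, y⁆ := by
    intro x y
    exact expandGen
      { toFun := fun z => ⁅z, y⁆
        map_add' := fun a b => add_lie a b y
        map_smul' := fun c a => smul_lie c a y } x
  have expandR : ∀ x y : n, ⁅x, y⁆ = ∑ j, e.repr y j • ⁅x, e j⁆ := by
    intro x y
    have hL : ∀ z, ⁅x, z⁆ = (LieAlgebra.ad ℂ n x) z := fun z => (LieAlgebra.ad_apply ℂ n x z).symm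
    rw [hL]
    rw [expandGen (LieAlgebra.ad ℂ n x) y]
    simp only [← hL]
  have stab0 : ∀ (x : n) (j : Fin 6), ⁅x, e j⁆ ∈ V2 := by
    intro x j
    rw [expandL]
    exact Submodule.sum_mem _ fun i _ => Submodule.smul_mem _ _ (bV2 i j)
  have stabAll : ∀ x y : n, ⁅x, y⁆ ∈ V2 := by
    intro x y
    rw [expandR]
    exact Submodule.sum_mem _ fun j _ => Submodule.smul_mem _ _ (stab0 x j)
  have stab2 : ∀ (x y : n), y ∈ V2 → ⁅x, y⁆ ∈ V' := by
    intro x y hy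
    induction hy using Submodule.span_induction with
    | mem z hz =>
      rw [expandL]
      exact Submodule.sum_mem _ fun i _ => Submodule.smul_mem _ _ (bV' i z hz)
    | zero => simp
    | add a b _ _ ha hb => rw [lie_add]; exact add_mem ha hb
    | smul c a _ ha => rw [lie_smul]; exact Submodule.smul_mem _ _ ha
  -- powers of -(ad x) on V'
  have negad : ∀ x y : n, (-(LieAlgebra.ad ℂ n x)) y = -⁅x, y⁆ := by
    intro x y
    rw [LinearMap.neg_apply, LieAlgebra.ad_apply]
  have ApowV' : ∀ (x : n) (k : ℕ) (y : n), y ∈ V' → ((-(LieAlgebra.ad ℂ n x)) ^ k) y ∈ V' := by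
    intro x k
    induction k with
    | zero => intro y hy; simpa using hy
    | succ m ih =>
      intro y hy
      rw [pow_succ, Module.End.mul_apply]
      refine ih _ ?_
      rw [negad]
      exact neg_mem (stab2 x y (hV'V2 hy))
  -- the linear form f
  set F : Module.Dual ℂ n := ∑ i ∈ ({2} : Finset (Fin 6)), ξ i • e.coord i with hFdef
  have hFe : ∀ j : Fin 6, F (e j) = if j = 2 then ξ 2 else 0 := by
    intro j
    rcases eq_or_ne j 2 with rfl | h
    · rw [if_pos rfl, hFdef, Finset.sum_singleton, LinearMap.smul_apply, Module.Basis.coord_apply,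
        Module.Basis.repr_self_apply, if_pos rfl, smul_eq_mul, mul_one]
    · rw [if_neg h, hFdef, Finset.sum_singleton, LinearMap.smul_apply, Module.Basis.coord_apply,
        Module.Basis.repr_self_apply, if_neg h, smul_eq_mul, mul_zero]
  have FV' : ∀ y ∈ V', F y = 0 := by
    have : V' ≤ LinearMap.ker F := by
      rw [hV'def, Submodule.span_le]
      rintro z hz
      simp only [Set.mem_insert_iff, Set.mem_singleton_iff] at hz
      rcases hz with rfl | rfl | rfl <;> simp [LinearMap.mem_ker, hFe]
    exact fun y hy => this hy
  -- key formula
  have keyF : ∀ (x : n) (j : Fin 6),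
      F (expNil (-(LieAlgebra.ad ℂ n x)) (e j)) = F (e j) + F ((-(LieAlgebra.ad ℂ n x)) (e j)) := by
    intro x j
    refine expNil_dual_apply _ ((hnil x).neg) _ _ ?_
    intro k hk
    obtain ⟨m, rfl⟩ : ∃ m, k = m + 2 := ⟨k - 2, by omega⟩
    have h1 : (-(LieAlgebra.ad ℂ n x)) (e j) ∈ V2 := by
      rw [negad]; exact neg_mem (stab0 x j)
    have h2 : (-(LieAlgebra.ad ℂ n x)) ((-(LieAlgebra.ad ℂ n x)) (e j)) ∈ V' := by
      rw [negad ((x : n)) _]; exact neg_mem (stab2 x _ h1)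
    have hrw : ((-(LieAlgebra.ad ℂ n x)) ^ (m + 2)) (e j)
        = ((-(LieAlgebra.ad ℂ n x)) ^ m) ((-(LieAlgebra.ad ℂ n x)) ((-(LieAlgebra.ad ℂ n x)) (e j))) := by
      rw [pow_succ, pow_succ, Module.End.mul_apply, Module.End.mul_apply]
    rw [hrw]
    exact FV' _ (ApowV' x m _ h2)
  have FA0 : ∀ (x : n) (j : Fin 6), j = 2 ∨ j = 3 ∨ j = 4 ∨ j = 5 →
      F ((-(LieAlgebra.ad ℂ n x)) (e j)) = 0 := by
    intro x j hj
    rw [negad]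
    refine FV' _ (neg_mem (stab2 x _ ?_))
    rcases hj with rfl | rfl | rfl | rfl
    · exact m2
    · exact hV'V2 m3
    · exact hV'V2 m4
    · exact hV'V2 m5
  constructor
  · rintro ⟨x, rfl⟩
    simp only [LinearMap.comp_apply]
    rw [keyF, keyF, keyF, keyF, FA0 x 2 (by norm_num), FA0 x 3 (by norm_num),
      FA0 x 4 (by norm_num), FA0 x 5 (by norm_num)]
    simp [hFe]
  · rintro ⟨hl2, hl3, hl4, hl5⟩
    set s : ℂ := -(lam (e 1)) / (ξ 2 * c₁) with hsdef
    set t : ℂ := lam (e 0) / (ξ 2 * c₁) with htdef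
    refine ⟨s • e 0 + t • e 1, ?_⟩
    have hxlie : ∀ y : n, ⁅s • e 0 + t • e 1, y⁆ = s • ⁅e 0, y⁆ + t • ⁅e 1, y⁆ := by
      intro y
      rw [add_lie, smul_lie, smul_lie]
    refine e.ext fun j => ?_
    rw [LinearMap.comp_apply, keyF, negad, hxlie]
    fin_cases j <;>
      simp only [Fin.zero_eta, Fin.mk_one, Fin.reduceFinMk, Fin.isValue, lie_self,
        h01, h10, h02, h03, z04, z05, z12, z13, h14, z15, smul_zero, smul_smul,
        zero_add, add_zero, map_neg, map_add, map_smul, hFe, smul_eq_mul,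
        hl2, hl3, hl4, hl5, htdef, hsdef, Fin.reduceEq, reduceIte, neg_neg, neg_zero,
        if_true, if_false] <;>
      first
        | (field_simp; ring)
        | field_simp
        | simp
end

section
/- Let ξ:{2α+β}→ℂ∖{0} be a map. A linear form λ∈𝔫* belongs to the coadjoint orbit Ω_{{2α+β},ξ} if and only if λ_{2α+β}=ξ(2α+β), 2c₂λ_βλ_{2α+β} − c₁λ_{α+β}² = 0, and λ_{3α+β}=λ_{3α+2β}=0 (with λ_α arbitrary). -/
open scoped RealInnerProductSpace

set_option maxHeartbeats 4000000 in
theorem stmt2 {n : Type*} [LieRing n] [LieAlgebra ℂ n]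
    (α β : EuclideanSpace ℝ (Fin 2))
    (hαα : ⟪α, α⟫ = 1) (hββ : ⟪β, β⟫ = 3) (hαβ : ⟪α, β⟫ = -(3/2))
    -- the six positive roots of `G₂`: `α, β, α+β, 2α+β, 3α+β, 3α+2β`, indexed by `Fin 6`
    (root : Fin 6 → EuclideanSpace ℝ (Fin 2))
    (hroot : root = ![α, β, α + β, (2:ℝ) • α + β, (3:ℝ) • α + β, (3:ℝ) • α + (2:ℝ) • β])
    (c₁ c₂ c₃ c₄ c₅ : ℂ)
    (hc₁ : c₁ ≠ 0) (hc₂ : c₂ ≠ 0) (hc₃ : c₃ ≠ 0) (hc₄ : c₄ ≠ 0) (hc₅ : c₅ ≠ 0)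
    (e : Module.Basis (Fin 6) ℂ n)
    (h01 : ⁅e 0, e 1⁆ = c₁ • e 2)
    (h02 : ⁅e 0, e 2⁆ = c₂ • e 3)
    (h03 : ⁅e 0, e 3⁆ = c₃ • e 4)
    (h41 : ⁅e 4, e 1⁆ = c₄ • e 5)
    (h23 : ⁅e 2, e 3⁆ = c₅ • e 5)
    (h0 : ∀ i j : Fin 6, root i + root j ∉ Set.range root → ⁅e i, e j⁆ = 0)
    (hnil : ∀ x : n, IsNilpotent (LieAlgebra.ad ℂ n x))
    (ξ : Fin 6 → ℂ) (hξ : ξ 3 ≠ 0)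
    (lam : Module.Dual ℂ n) :
    lam ∈ coadjointOrbit e {3} ξ ↔
      (lam (e 3) = ξ 3 ∧ 2 * c₂ * lam (e 1) * lam (e 3) - c₁ * lam (e 2) ^ 2 = 0 ∧
        lam (e 4) = 0 ∧ lam (e 5) = 0) := by
  have hβα : ⟪β, α⟫ = -(3/2) := by rw [real_inner_comm]; exact hαβ
  have hind : ∀ a b : ℝ, a • α + b • β = 0 → a = 0 ∧ b = 0 := by
    intro a b h
    have h1 : ⟪a • α + b • β, α⟫ = 0 := by rw [h, inner_zero_left]
    have h2 : ⟪a • α + b • β, β⟫ = 0 := by rw [h, inner_zero_left]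
    rw [inner_add_left, real_inner_smul_left, real_inner_smul_left, hαα, hβα] at h1
    rw [inner_add_left, real_inner_smul_left, real_inner_smul_left, hαβ, hββ] at h2
    constructor <;> linarith
  have hni : ∀ p q r s : ℝ, p • α + q • β = r • α + s • β → p = r ∧ q = s := by
    intro p q r s h
    have h' : (p - r) • α + (q - s) • β = 0 := by
      have := sub_eq_zero_of_eq h
      linear_combination (norm := module) this
    obtain ⟨h1, h2⟩ := hind _ _ h'
    constructor <;> linarith
  have hr0 : root 0 = (1:ℝ) • α + (0:ℝ) • β := by rw [hroot]; show α = _; module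
  have hr1 : root 1 = (0:ℝ) • α + (1:ℝ) • β := by rw [hroot]; show β = _; module
  have hr2 : root 2 = (1:ℝ) • α + (1:ℝ) • β := by rw [hroot]; show α + β = _; module
  have hr3 : root 3 = (2:ℝ) • α + (1:ℝ) • β := by rw [hroot]; show (2:ℝ) • α + β = _; module
  have hr4 : root 4 = (3:ℝ) • α + (1:ℝ) • β := by rw [hroot]; show (3:ℝ) • α + β = _; module
  have hr5 : root 5 = (3:ℝ) • α + (2:ℝ) • β := by rw [hroot]; rfl
  have hnr : ∀ p q : ℝ, p • α + q • β ∈ Set.range root →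
      ((p=1∧q=0)∨(p=0∧q=1)∨(p=1∧q=1)∨(p=2∧q=1)∨(p=3∧q=1)∨(p=3∧q=2)) := by
    rintro p q ⟨k, hk⟩
    fin_cases k
    · exact Or.inl (hni p q 1 0 (by rw [← hk]; exact hr0))
    · exact Or.inr (Or.inl (hni p q 0 1 (by rw [← hk]; exact hr1)))
    · exact Or.inr (Or.inr (Or.inl (hni p q 1 1 (by rw [← hk]; exact hr2))))
    · exact Or.inr (Or.inr (Or.inr (Or.inl (hni p q 2 1 (by rw [← hk]; exact hr3)))))
    · exact Or.inr (Or.inr (Or.inr (Or.inr (Or.inl (hni p q 3 1 (by rw [← hk]; exact hr4))))))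
    · exact Or.inr (Or.inr (Or.inr (Or.inr (Or.inr (hni p q 3 2 (by rw [← hk]; exact hr5))))))
  have hz : ∀ (i j : Fin 6) (p q : ℝ), root i + root j = p • α + q • β →
      ¬((p=1∧q=0)∨(p=0∧q=1)∨(p=1∧q=1)∨(p=2∧q=1)∨(p=3∧q=1)∨(p=3∧q=2)) → ⁅e i, e j⁆ = 0 := by
    intro i j p q hpq hno
    exact h0 i j (fun hm => hno (hnr p q (hpq ▸ hm)))
  have z04 : ⁅e 0, e 4⁆ = 0 := hz 0 4 4 1 (by rw [hr0, hr4]; module) (by norm_num)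
  have z05 : ⁅e 0, e 5⁆ = 0 := hz 0 5 4 2 (by rw [hr0, hr5]; module) (by norm_num)
  have z12 : ⁅e 1, e 2⁆ = 0 := hz 1 2 1 2 (by rw [hr1, hr2]; module) (by norm_num)
  have z13 : ⁅e 1, e 3⁆ = 0 := hz 1 3 2 2 (by rw [hr1, hr3]; module) (by norm_num)
  have z15 : ⁅e 1, e 5⁆ = 0 := hz 1 5 3 3 (by rw [hr1, hr5]; module) (by norm_num)
  have z24 : ⁅e 2, e 4⁆ = 0 := hz 2 4 4 2 (by rw [hr2, hr4]; module) (by norm_num)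
  have z25 : ⁅e 2, e 5⁆ = 0 := hz 2 5 4 3 (by rw [hr2, hr5]; module) (by norm_num)
  have z34 : ⁅e 3, e 4⁆ = 0 := hz 3 4 5 2 (by rw [hr3, hr4]; module) (by norm_num)
  have z35 : ⁅e 3, e 5⁆ = 0 := hz 3 5 5 3 (by rw [hr3, hr5]; module) (by norm_num)
  have z45 : ⁅e 4, e 5⁆ = 0 := hz 4 5 6 3 (by rw [hr4, hr5]; module) (by norm_num)
  have h10 : ⁅e 1, e 0⁆ = -(c₁ • e 2) := by rw [← h01]; exact (lie_skew _ _).symm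
  have h20 : ⁅e 2, e 0⁆ = -(c₂ • e 3) := by rw [← h02]; exact (lie_skew _ _).symm
  have h30 : ⁅e 3, e 0⁆ = -(c₃ • e 4) := by rw [← h03]; exact (lie_skew _ _).symm
  have h14 : ⁅e 1, e 4⁆ = -(c₄ • e 5) := by rw [← h41]; exact (lie_skew _ _).symm
  have h32 : ⁅e 3, e 2⁆ = -(c₅ • e 5) := by rw [← h23]; exact (lie_skew _ _).symm
  have z40 : ⁅e 4, e 0⁆ = 0 := by rw [← neg_eq_zero, lie_skew, z04]
  have z50 : ⁅e 5, e 0⁆ = 0 := by rw [← neg_eq_zero, lie_skew, z05]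
  have z21 : ⁅e 2, e 1⁆ = 0 := by rw [← neg_eq_zero, lie_skew, z12]
  have z31 : ⁅e 3, e 1⁆ = 0 := by rw [← neg_eq_zero, lie_skew, z13]
  have z51 : ⁅e 5, e 1⁆ = 0 := by rw [← neg_eq_zero, lie_skew, z15]
  have z42 : ⁅e 4, e 2⁆ = 0 := by rw [← neg_eq_zero, lie_skew, z24]
  have z52 : ⁅e 5, e 2⁆ = 0 := by rw [← neg_eq_zero, lie_skew, z25]
  have z43 : ⁅e 4, e 3⁆ = 0 := by rw [← neg_eq_zero, lie_skew, z34]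
  have z53 : ⁅e 5, e 3⁆ = 0 := by rw [← neg_eq_zero, lie_skew, z35]
  have z54 : ⁅e 5, e 4⁆ = 0 := by rw [← neg_eq_zero, lie_skew, z45]
  have main : ∀ x : n,
      ((∑ i ∈ ({3} : Finset (Fin 6)), ξ i • e.coord i).comp
          (expNil (-(LieAlgebra.ad ℂ n x)))) (e 0) =
        ξ 3 * (c₂ * e.repr x 2) - 2⁻¹ * ξ 3 * (c₁ * c₂ * e.repr x 0 * e.repr x 1) ∧
      ((∑ i ∈ ({3} : Finset (Fin 6)), ξ i • e.coord i).comp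
          (expNil (-(LieAlgebra.ad ℂ n x)))) (e 1) =
        2⁻¹ * ξ 3 * (c₁ * c₂ * e.repr x 0 * e.repr x 0) ∧
      ((∑ i ∈ ({3} : Finset (Fin 6)), ξ i • e.coord i).comp
          (expNil (-(LieAlgebra.ad ℂ n x)))) (e 2) =
        -(ξ 3 * (c₂ * e.repr x 0)) ∧
      ((∑ i ∈ ({3} : Finset (Fin 6)), ξ i • e.coord i).comp
          (expNil (-(LieAlgebra.ad ℂ n x)))) (e 3) = ξ 3 ∧
      ((∑ i ∈ ({3} : Finset (Fin 6)), ξ i • e.coord i).comp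
          (expNil (-(LieAlgebra.ad ℂ n x)))) (e 4) = 0 ∧
      ((∑ i ∈ ({3} : Finset (Fin 6)), ξ i • e.coord i).comp
          (expNil (-(LieAlgebra.ad ℂ n x)))) (e 5) = 0 := by
    intro x
    set t : Fin 6 → ℂ := fun i => e.repr x i with ht
    set A : Module.End ℂ n := -(LieAlgebra.ad ℂ n x) with hA
    have hAv : ∀ v : n, A v = ⁅v, x⁆ := by
      intro v
      rw [hA, LinearMap.neg_apply, LieAlgebra.ad_apply]
      exact lie_skew v x
    have hx : ∑ i, t i • e i = x := by rw [ht]; exact e.sum_repr x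
    have a0 : A (e 0) = (c₁ * t 1) • e 2 + (c₂ * t 2) • e 3 + (c₃ * t 3) • e 4 := by
      conv_lhs => rw [hAv, ← hx, Fin.sum_univ_six]
      simp only [lie_add, lie_smul, h01, h02, h03, z04, z05, lie_self, smul_zero, smul_smul,
        add_zero, zero_add]
      module
    have a1 : A (e 1) = (-(c₁ * t 0)) • e 2 + (-(c₄ * t 4)) • e 5 := by
      conv_lhs => rw [hAv, ← hx, Fin.sum_univ_six]
      simp only [lie_add, lie_smul, h10, h14, z12, z13, z15, lie_self, smul_zero, smul_smul,
        add_zero, zero_add, smul_neg]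
      module
    have a2 : A (e 2) = (-(c₂ * t 0)) • e 3 + (c₅ * t 3) • e 5 := by
      conv_lhs => rw [hAv, ← hx, Fin.sum_univ_six]
      simp only [lie_add, lie_smul, h20, h23, z21, z24, z25, lie_self, smul_zero, smul_smul,
        add_zero, zero_add, smul_neg]
      module
    have a3 : A (e 3) = (-(c₃ * t 0)) • e 4 + (-(c₅ * t 2)) • e 5 := by
      conv_lhs => rw [hAv, ← hx, Fin.sum_univ_six]
      simp only [lie_add, lie_smul, h30, h32, z31, z34, z35, lie_self, smul_zero, smul_smul,
        add_zero, zero_add, smul_neg]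
      module
    have a4 : A (e 4) = (c₄ * t 1) • e 5 := by
      conv_lhs => rw [hAv, ← hx, Fin.sum_univ_six]
      simp only [lie_add, lie_smul, h41, z40, z42, z43, z45, lie_self, smul_zero, smul_smul,
        add_zero, zero_add]
      module
    have a5 : A (e 5) = 0 := by
      conv_lhs => rw [hAv, ← hx, Fin.sum_univ_six]
      simp only [lie_add, lie_smul, z50, z51, z52, z53, z54, lie_self, smul_zero,
        add_zero, zero_add]
    have hc3 : ∀ v, e.coord 3 (A (A (A v))) = 0 := by
      have h : (e.coord 3).comp (A ∘ₗ (A ∘ₗ (A : n →ₗ[ℂ] n))) = 0 := by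
        apply Module.Basis.ext e
        intro i
        fin_cases i <;>
          simp [a0, a1, a2, a3, a4, a5, map_add, map_smul, Module.Basis.coord_apply, Module.Basis.repr_self,
            Finsupp.single_apply]
      intro v
      simpa using LinearMap.ext_iff.1 h v
    have hAnil : IsNilpotent A := by rw [hA]; exact (hnil x).neg
    have key : ∀ v : n,
        ((∑ i ∈ ({3} : Finset (Fin 6)), ξ i • e.coord i).comp (expNil A)) v =
          ξ 3 * (e.coord 3 v) + ξ 3 * (e.coord 3 (A v)) + (2⁻¹ * ξ 3) * (e.coord 3 (A (A v))) := by
      intro v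
      rw [Finset.sum_singleton, LinearMap.comp_apply, LinearMap.smul_apply, smul_eq_mul, expNil,
        LinearMap.sum_apply, map_sum, Finset.mul_sum]
      have hg : ∀ k : ℕ, ξ 3 * (e.coord 3) (((k.factorial : ℂ)⁻¹ • A ^ k) v) =
          ξ 3 * ((k.factorial : ℂ)⁻¹ * (e.coord 3) ((A ^ k) v)) := by
        intro k
        rw [LinearMap.smul_apply, map_smul, smul_eq_mul]
      simp only [hg]
      set N := nilpotencyClass A with hN
      set g : ℕ → ℂ := fun k => ξ 3 * ((k.factorial : ℂ)⁻¹ * (e.coord 3) ((A ^ k) v)) with hgdef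
      have hbig : ∀ k, 3 ≤ k → g k = 0 := by
        intro k hk
        have hsplit : A ^ k = A * (A * (A * A ^ (k - 3))) := by
          have : A ^ k = A ^ 3 * A ^ (k - 3) := by rw [← pow_add]; congr 1; omega
          rw [this, pow_succ, pow_succ, pow_one]
          noncomm_ring
        have : (e.coord 3) ((A ^ k) v) = 0 := by
          rw [hsplit]
          simp only [Module.End.mul_apply]
          exact hc3 _
        rw [hgdef]
        simp [this]
      have hzN : ∀ k, N ≤ k → g k = 0 := by
        intro k hk
        have hA0 : A ^ N = 0 := pow_nilpotencyClass hAnil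
        have : A ^ k = A ^ (k - N) * A ^ N := by rw [← pow_add]; congr 1; omega
        rw [hgdef]
        simp [this, hA0]
      have e1 : ∑ k ∈ Finset.range N, g k = ∑ k ∈ Finset.range (max N 3), g k :=
        Finset.sum_subset (Finset.range_subset_range.2 (le_max_left _ _))
          (fun k hk hnk => hzN k (by simp only [Finset.mem_range, not_lt] at hnk; omega))
      have e2 : ∑ k ∈ Finset.range (max N 3), g k = ∑ k ∈ Finset.range 3, g k :=
        (Finset.sum_subset (Finset.range_subset_range.2 (le_max_right _ _))
          (fun k hk hnk => hbig k (by simp only [Finset.mem_range, not_lt] at hnk; omega))).symm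
      rw [show ∑ k ∈ Finset.range N, ξ 3 * ((k.factorial : ℂ)⁻¹ * (e.coord 3) ((A ^ k) v))
          = ∑ k ∈ Finset.range N, g k from rfl, e1, e2,
        Finset.sum_range_succ, Finset.sum_range_succ, Finset.sum_range_one]
      rw [hgdef]
      simp only [pow_zero, pow_one, pow_two, Module.End.mul_apply, Module.End.one_apply,
        Nat.factorial]
      push_cast
      ring
    refine ⟨?_, ?_, ?_, ?_, ?_, ?_⟩
    · rw [key]
      simp [a0, a1, a2, a3, a4, a5, map_add, map_smul, Module.Basis.coord_apply, Module.Basis.repr_self,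
        Finsupp.single_apply, ht]
      ring
    · rw [key]
      simp [a0, a1, a2, a3, a4, a5, map_add, map_smul, Module.Basis.coord_apply, Module.Basis.repr_self,
        Finsupp.single_apply, ht]
      left; ring
    · rw [key]
      simp [a0, a1, a2, a3, a4, a5, map_add, map_smul, Module.Basis.coord_apply, Module.Basis.repr_self,
        Finsupp.single_apply, ht]
    · rw [key]
      simp [a0, a1, a2, a3, a4, a5, map_add, map_smul, Module.Basis.coord_apply, Module.Basis.repr_self,
        Finsupp.single_apply, ht]
    · rw [key]
      simp [a0, a1, a2, a3, a4, a5, map_add, map_smul, Module.Basis.coord_apply, Module.Basis.repr_self,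
        Finsupp.single_apply, ht]
    · rw [key]
      simp [a0, a1, a2, a3, a4, a5, map_add, map_smul, Module.Basis.coord_apply, Module.Basis.repr_self,
        Finsupp.single_apply, ht]
  constructor
  · rintro ⟨x, rfl⟩
    obtain ⟨m0, m1, m2, m3, m4, m5⟩ := main x
    refine ⟨m3, ?_, m4, m5⟩
    rw [m1, m2, m3]
    ring
  · rintro ⟨h3, hrel, h4, h5⟩
    obtain ⟨a, ha⟩ : ∃ a : ℂ, a = -(lam (e 2)) / (ξ 3 * c₂) := ⟨_, rfl⟩
    obtain ⟨b, hb⟩ : ∃ b : ℂ, b = lam (e 0) / (ξ 3 * c₂) := ⟨_, rfl⟩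
    refine ⟨a • e 0 + b • e 2, ?_⟩
    obtain ⟨m0, m1, m2, m3, m4, m5⟩ := main (a • e 0 + b • e 2)
    have hrx0 : e.repr (a • e 0 + b • e 2) 0 = a := by
      simp [map_add, map_smul, Module.Basis.repr_self, Finsupp.add_apply, Finsupp.smul_apply,
        Finsupp.single_apply]
    have hrx1 : e.repr (a • e 0 + b • e 2) 1 = 0 := by
      simp [map_add, map_smul, Module.Basis.repr_self, Finsupp.add_apply, Finsupp.smul_apply,
        Finsupp.single_apply]
    have hrx2 : e.repr (a • e 0 + b • e 2) 2 = b := by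
      simp [map_add, map_smul, Module.Basis.repr_self, Finsupp.add_apply, Finsupp.smul_apply,
        Finsupp.single_apply]
    have hξc : ξ 3 * c₂ ≠ 0 := mul_ne_zero hξ hc₂
    apply Module.Basis.ext e
    intro j
    fin_cases j
    · show lam (e 0) = ((∑ i ∈ ({3} : Finset (Fin 6)), ξ i • e.coord i).comp
          (expNil (-(LieAlgebra.ad ℂ n (a • e 0 + b • e 2))))) (e 0)
      rw [m0, hrx1, hrx2, hb]
      field_simp
      ring
    · show lam (e 1) = ((∑ i ∈ ({3} : Finset (Fin 6)), ξ i • e.coord i).comp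
          (expNil (-(LieAlgebra.ad ℂ n (a • e 0 + b • e 2))))) (e 1)
      rw [m1, hrx0, ha]
      rw [h3] at hrel
      field_simp
      linear_combination hrel
    · show lam (e 2) = ((∑ i ∈ ({3} : Finset (Fin 6)), ξ i • e.coord i).comp
          (expNil (-(LieAlgebra.ad ℂ n (a • e 0 + b • e 2))))) (e 2)
      rw [m2, hrx0, ha]
      field_simp
    · show lam (e 3) = ((∑ i ∈ ({3} : Finset (Fin 6)), ξ i • e.coord i).comp
          (expNil (-(LieAlgebra.ad ℂ n (a • e 0 + b • e 2))))) (e 3)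
      rw [m3]; exact h3
    · show lam (e 4) = ((∑ i ∈ ({3} : Finset (Fin 6)), ξ i • e.coord i).comp
          (expNil (-(LieAlgebra.ad ℂ n (a • e 0 + b • e 2))))) (e 4)
      rw [m4]; exact h4
    · show lam (e 5) = ((∑ i ∈ ({3} : Finset (Fin 6)), ξ i • e.coord i).comp
          (expNil (-(LieAlgebra.ad ℂ n (a • e 0 + b • e 2))))) (e 5)
      rw [m5]; exact h5
end

section
/- Let ξ:{3α+β}→ℂ∖{0} be a map. A linear form λ∈𝔫* belongs to the coadjoint orbit Ω_{{3α+β},ξ} if and only if λ_{3α+β}=ξ(3α+β), λ_{3α+2β}=0, 6c₃²λ_βλ_{3α+β}² − c₁c₂λ_{2α+β}³ = 0, and 2c₃λ_{α+β}λ_{3α+β} − c₂λ_{2α+β}² = 0 (with λ_α arbitrary). -/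
open scoped RealInnerProductSpace

lemma expNil_eq_of_pow_eq_zero {M : Type*} [AddCommGroup M] [Module ℂ M]
    (A : Module.End ℂ M) {N : ℕ} (hN : A ^ N = 0) :
    expNil A = ∑ k ∈ Finset.range N, (k.factorial : ℂ)⁻¹ • A ^ k := by
  have hA : IsNilpotent A := ⟨N, hN⟩
  have hle : nilpotencyClass A ≤ N := Nat.sInf_le hN
  rw [expNil]
  apply Finset.sum_subset (Finset.range_subset_range.2 hle)
  intro k _ hk
  rw [Finset.mem_range, not_lt] at hk
  have h2 : A ^ k = 0 := by
    have h1 := pow_nilpotencyClass hA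
    calc A ^ k = A ^ (nilpotencyClass A) * A ^ (k - nilpotencyClass A) := by
          rw [← pow_add]; congr 1; omega
      _ = 0 := by rw [h1, zero_mul]
  rw [h2, smul_zero]

set_option maxHeartbeats 1600000 in
theorem stmt3 {n : Type*} [LieRing n] [LieAlgebra ℂ n]
    (α β : EuclideanSpace ℝ (Fin 2))
    (hαα : ⟪α, α⟫ = 1) (hββ : ⟪β, β⟫ = 3) (hαβ : ⟪α, β⟫ = -(3/2))
    -- the six positive roots of `G₂`: `α, β, α+β, 2α+β, 3α+β, 3α+2β`, indexed by `Fin 6`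
    (root : Fin 6 → EuclideanSpace ℝ (Fin 2))
    (hroot : root = ![α, β, α + β, (2:ℝ) • α + β, (3:ℝ) • α + β, (3:ℝ) • α + (2:ℝ) • β])
    (c₁ c₂ c₃ c₄ c₅ : ℂ)
    (hc₁ : c₁ ≠ 0) (hc₂ : c₂ ≠ 0) (hc₃ : c₃ ≠ 0) (hc₄ : c₄ ≠ 0) (hc₅ : c₅ ≠ 0)
    (e : Module.Basis (Fin 6) ℂ n)
    (h01 : ⁅e 0, e 1⁆ = c₁ • e 2)
    (h02 : ⁅e 0, e 2⁆ = c₂ • e 3)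
    (h03 : ⁅e 0, e 3⁆ = c₃ • e 4)
    (h41 : ⁅e 4, e 1⁆ = c₄ • e 5)
    (h23 : ⁅e 2, e 3⁆ = c₅ • e 5)
    (h0 : ∀ i j : Fin 6, root i + root j ∉ Set.range root → ⁅e i, e j⁆ = 0)
    (hnil : ∀ x : n, IsNilpotent (LieAlgebra.ad ℂ n x))
    (ξ : Fin 6 → ℂ) (hξ : ξ 4 ≠ 0)
    (lam : Module.Dual ℂ n) :
    lam ∈ coadjointOrbit e {4} ξ ↔
      (lam (e 4) = ξ 4 ∧ lam (e 5) = 0 ∧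
        6 * c₃ ^ 2 * lam (e 1) * lam (e 4) ^ 2 - c₁ * c₂ * lam (e 3) ^ 3 = 0 ∧
        2 * c₃ * lam (e 2) * lam (e 4) - c₂ * lam (e 3) ^ 2 = 0) := by
  have hβα : ⟪β, α⟫ = -(3/2) := by rw [real_inner_comm]; exact hαβ
  have hij : ∀ a b a' b' : ℝ, a • α + b • β = a' • α + b' • β → a = a' ∧ b = b' := by
    intro a b a' b' h
    have h1 : ⟪a • α + b • β, α⟫ = ⟪a' • α + b' • β, α⟫ := by rw [h]
    have h2 : ⟪a • α + b • β, β⟫ = ⟪a' • α + b' • β, β⟫ := by rw [h]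
    rw [inner_add_left, inner_add_left, real_inner_smul_left, real_inner_smul_left,
      real_inner_smul_left, real_inner_smul_left, hαα, hβα] at h1
    rw [inner_add_left, inner_add_left, real_inner_smul_left, real_inner_smul_left,
      real_inner_smul_left, real_inner_smul_left, hαβ, hββ] at h2
    constructor <;> linarith
  have hnotin : ∀ a b : ℝ, ¬(a = 1 ∧ b = 0) → ¬(a = 0 ∧ b = 1) → ¬(a = 1 ∧ b = 1) →
      ¬(a = 2 ∧ b = 1) → ¬(a = 3 ∧ b = 1) → ¬(a = 3 ∧ b = 2) →
      a • α + b • β ∉ Set.range root := by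
    rintro a b n1 n2 n3 n4 n5 n6 ⟨k, hk⟩
    rw [hroot] at hk
    fin_cases k
    · exact n1 (hij a b 1 0 (hk.symm.trans (by show α = _; module)))
    · exact n2 (hij a b 0 1 (hk.symm.trans (by show β = _; module)))
    · exact n3 (hij a b 1 1 (hk.symm.trans (by show α + β = _; module)))
    · exact n4 (hij a b 2 1 (hk.symm.trans (by show (2:ℝ) • α + β = _; module)))
    · exact n5 (hij a b 3 1 (hk.symm.trans (by show (3:ℝ) • α + β = _; module)))
    · exact n6 (hij a b 3 2 (hk.symm.trans (by show (3:ℝ) • α + (2:ℝ) • β = _; module)))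
  have z04 : ⁅e 0, e 4⁆ = 0 := h0 0 4 (by
    have hs : root 0 + root 4 = (4:ℝ) • α + (1:ℝ) • β := by
      rw [hroot]; show α + ((3:ℝ) • α + β) = _; module
    rw [hs]
    exact hnotin 4 1 (by norm_num) (by norm_num) (by norm_num) (by norm_num) (by norm_num)
      (by norm_num))
  have z05 : ⁅e 0, e 5⁆ = 0 := h0 0 5 (by
    have hs : root 0 + root 5 = (4:ℝ) • α + (2:ℝ) • β := by
      rw [hroot]; show α + ((3:ℝ) • α + (2:ℝ) • β) = _; module
    rw [hs]
    exact hnotin 4 2 (by norm_num) (by norm_num) (by norm_num) (by norm_num) (by norm_num)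
      (by norm_num))
  have z12 : ⁅e 1, e 2⁆ = 0 := h0 1 2 (by
    have hs : root 1 + root 2 = (1:ℝ) • α + (2:ℝ) • β := by
      rw [hroot]; show β + (α + β) = _; module
    rw [hs]
    exact hnotin 1 2 (by norm_num) (by norm_num) (by norm_num) (by norm_num) (by norm_num)
      (by norm_num))
  have z13 : ⁅e 1, e 3⁆ = 0 := h0 1 3 (by
    have hs : root 1 + root 3 = (2:ℝ) • α + (2:ℝ) • β := by
      rw [hroot]; show β + ((2:ℝ) • α + β) = _; module
    rw [hs]
    exact hnotin 2 2 (by norm_num) (by norm_num) (by norm_num) (by norm_num) (by norm_num)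
      (by norm_num))
  have z15 : ⁅e 1, e 5⁆ = 0 := h0 1 5 (by
    have hs : root 1 + root 5 = (3:ℝ) • α + (3:ℝ) • β := by
      rw [hroot]; show β + ((3:ℝ) • α + (2:ℝ) • β) = _; module
    rw [hs]
    exact hnotin 3 3 (by norm_num) (by norm_num) (by norm_num) (by norm_num) (by norm_num)
      (by norm_num))
  have z24 : ⁅e 2, e 4⁆ = 0 := h0 2 4 (by
    have hs : root 2 + root 4 = (4:ℝ) • α + (2:ℝ) • β := by
      rw [hroot]; show (α + β) + ((3:ℝ) • α + β) = _; module
    rw [hs]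
    exact hnotin 4 2 (by norm_num) (by norm_num) (by norm_num) (by norm_num) (by norm_num)
      (by norm_num))
  have z25 : ⁅e 2, e 5⁆ = 0 := h0 2 5 (by
    have hs : root 2 + root 5 = (4:ℝ) • α + (3:ℝ) • β := by
      rw [hroot]; show (α + β) + ((3:ℝ) • α + (2:ℝ) • β) = _; module
    rw [hs]
    exact hnotin 4 3 (by norm_num) (by norm_num) (by norm_num) (by norm_num) (by norm_num)
      (by norm_num))
  have z34 : ⁅e 3, e 4⁆ = 0 := h0 3 4 (by
    have hs : root 3 + root 4 = (5:ℝ) • α + (2:ℝ) • β := by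
      rw [hroot]; show ((2:ℝ) • α + β) + ((3:ℝ) • α + β) = _; module
    rw [hs]
    exact hnotin 5 2 (by norm_num) (by norm_num) (by norm_num) (by norm_num) (by norm_num)
      (by norm_num))
  have z35 : ⁅e 3, e 5⁆ = 0 := h0 3 5 (by
    have hs : root 3 + root 5 = (5:ℝ) • α + (3:ℝ) • β := by
      rw [hroot]; show ((2:ℝ) • α + β) + ((3:ℝ) • α + (2:ℝ) • β) = _; module
    rw [hs]
    exact hnotin 5 3 (by norm_num) (by norm_num) (by norm_num) (by norm_num) (by norm_num)
      (by norm_num))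
  have z45 : ⁅e 4, e 5⁆ = 0 := h0 4 5 (by
    have hs : root 4 + root 5 = (6:ℝ) • α + (3:ℝ) • β := by
      rw [hroot]; show ((3:ℝ) • α + β) + ((3:ℝ) • α + (2:ℝ) • β) = _; module
    rw [hs]
    exact hnotin 6 3 (by norm_num) (by norm_num) (by norm_num) (by norm_num) (by norm_num)
      (by norm_num))
  have h10 : ⁅e 1, e 0⁆ = -(c₁ • e 2) := by rw [← lie_skew, h01]
  have h20 : ⁅e 2, e 0⁆ = -(c₂ • e 3) := by rw [← lie_skew, h02]
  have h30 : ⁅e 3, e 0⁆ = -(c₃ • e 4) := by rw [← lie_skew, h03]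
  have h14 : ⁅e 1, e 4⁆ = -(c₄ • e 5) := by rw [← lie_skew, h41]
  have h32 : ⁅e 3, e 2⁆ = -(c₅ • e 5) := by rw [← lie_skew, h23]
  have z40 : ⁅e 4, e 0⁆ = 0 := by rw [← lie_skew, z04, neg_zero]
  have z50 : ⁅e 5, e 0⁆ = 0 := by rw [← lie_skew, z05, neg_zero]
  have z21 : ⁅e 2, e 1⁆ = 0 := by rw [← lie_skew, z12, neg_zero]
  have z31 : ⁅e 3, e 1⁆ = 0 := by rw [← lie_skew, z13, neg_zero]
  have z51 : ⁅e 5, e 1⁆ = 0 := by rw [← lie_skew, z15, neg_zero]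
  have z42 : ⁅e 4, e 2⁆ = 0 := by rw [← lie_skew, z24, neg_zero]
  have z52 : ⁅e 5, e 2⁆ = 0 := by rw [← lie_skew, z25, neg_zero]
  have z43 : ⁅e 4, e 3⁆ = 0 := by rw [← lie_skew, z34, neg_zero]
  have z53 : ⁅e 5, e 3⁆ = 0 := by rw [← lie_skew, z35, neg_zero]
  have z54 : ⁅e 5, e 4⁆ = 0 := by rw [← lie_skew, z45, neg_zero]
  -- the key computation: the value of `f ∘ exp(-ad x)` on each basis vector
  have main : ∀ x : n,
      ((∑ i ∈ ({4} : Finset (Fin 6)), ξ i • e.coord i).comp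
          (expNil (-(LieAlgebra.ad ℂ n x)))) (e 0)
        = ξ 4 * (c₃ * e.repr x 3 - c₂ * c₃ * e.repr x 0 * e.repr x 2 / 2
            + c₁ * c₂ * c₃ * (e.repr x 0) ^ 2 * e.repr x 1 / 6) ∧
      ((∑ i ∈ ({4} : Finset (Fin 6)), ξ i • e.coord i).comp
          (expNil (-(LieAlgebra.ad ℂ n x)))) (e 1)
        = ξ 4 * (-(c₁ * c₂ * c₃ * (e.repr x 0) ^ 3) / 6) ∧
      ((∑ i ∈ ({4} : Finset (Fin 6)), ξ i • e.coord i).comp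
          (expNil (-(LieAlgebra.ad ℂ n x)))) (e 2)
        = ξ 4 * (c₂ * c₃ * (e.repr x 0) ^ 2 / 2) ∧
      ((∑ i ∈ ({4} : Finset (Fin 6)), ξ i • e.coord i).comp
          (expNil (-(LieAlgebra.ad ℂ n x)))) (e 3)
        = ξ 4 * (-(c₃ * e.repr x 0)) ∧
      ((∑ i ∈ ({4} : Finset (Fin 6)), ξ i • e.coord i).comp
          (expNil (-(LieAlgebra.ad ℂ n x)))) (e 4) = ξ 4 ∧
      ((∑ i ∈ ({4} : Finset (Fin 6)), ξ i • e.coord i).comp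
          (expNil (-(LieAlgebra.ad ℂ n x)))) (e 5) = 0 := by
    intro x
    have hx := e.sum_repr x
    set x0 := e.repr x 0; set x1 := e.repr x 1; set x2 := e.repr x 2
    set x3 := e.repr x 3; set x4 := e.repr x 4; set x5 := e.repr x 5
    have hA0 : (LieAlgebra.ad ℂ n x) (e 0)
        = (-(c₁ * x1)) • e 2 + (-(c₂ * x2)) • e 3 + (-(c₃ * x3)) • e 4 := by
      rw [LieAlgebra.ad_apply]
      conv_lhs => rw [← hx]
      rw [Fin.sum_univ_six]; simp only [add_lie]
      simp only [smul_lie, h10, h20, h30, z40, z50, lie_self]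
      module
    have hA1 : (LieAlgebra.ad ℂ n x) (e 1) = (c₁ * x0) • e 2 + (c₄ * x4) • e 5 := by
      rw [LieAlgebra.ad_apply]
      conv_lhs => rw [← hx]
      rw [Fin.sum_univ_six]; simp only [add_lie]
      simp only [smul_lie, h01, h41, z21, z31, z51, lie_self]
      module
    have hA2 : (LieAlgebra.ad ℂ n x) (e 2) = (c₂ * x0) • e 3 + (-(c₅ * x3)) • e 5 := by
      rw [LieAlgebra.ad_apply]
      conv_lhs => rw [← hx]
      rw [Fin.sum_univ_six]; simp only [add_lie]
      simp only [smul_lie, h02, h32, z12, z42, z52, lie_self]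
      module
    have hA3 : (LieAlgebra.ad ℂ n x) (e 3) = (c₃ * x0) • e 4 + (c₅ * x2) • e 5 := by
      rw [LieAlgebra.ad_apply]
      conv_lhs => rw [← hx]
      rw [Fin.sum_univ_six]; simp only [add_lie]
      simp only [smul_lie, h03, h23, z13, z43, z53, lie_self]
      module
    have hA4 : (LieAlgebra.ad ℂ n x) (e 4) = (-(c₄ * x1)) • e 5 := by
      rw [LieAlgebra.ad_apply]
      conv_lhs => rw [← hx]
      rw [Fin.sum_univ_six]; simp only [add_lie]
      simp only [smul_lie, h14, z04, z24, z34, z54, lie_self]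
      module
    have hA5 : (LieAlgebra.ad ℂ n x) (e 5) = 0 := by
      rw [LieAlgebra.ad_apply]
      conv_lhs => rw [← hx]
      rw [Fin.sum_univ_six]; simp only [add_lie]
      simp only [smul_lie, z05, z15, z25, z35, z45, lie_self]
      module
    set A := LieAlgebra.ad ℂ n x with hA
    have h5 : (-A) ^ 5 = 0 := by
      apply Module.Basis.ext e
      intro i
      fin_cases i <;>
        simp [pow_succ, Module.End.mul_apply, LinearMap.neg_apply, hA0, hA1, hA2, hA3, hA4, hA5,
          map_add, map_smul, smul_smul, LinearMap.zero_apply, map_neg]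
    have hexp : expNil (-A) = ∑ k ∈ Finset.range 5, (k.factorial : ℂ)⁻¹ • (-A) ^ k :=
      expNil_eq_of_pow_eq_zero _ h5
    have key0 : (e.coord 4) ((expNil (-A)) (e 0))
        = c₃ * x3 - c₂ * c₃ * x0 * x2 / 2 + c₁ * c₂ * c₃ * x0 ^ 2 * x1 / 6 := by
      rw [hexp]
      simp [Finset.sum_range_succ, pow_succ, Module.End.mul_apply, LinearMap.neg_apply,
        hA0, hA1, hA2, hA3, hA4, hA5, map_add, map_smul, smul_smul, Module.Basis.coord_apply,
        Module.Basis.repr_self, Finsupp.single_apply, Nat.factorial]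
      ring
    have key1 : (e.coord 4) ((expNil (-A)) (e 1)) = -(c₁ * c₂ * c₃ * x0 ^ 3) / 6 := by
      rw [hexp]
      simp [Finset.sum_range_succ, pow_succ, Module.End.mul_apply, LinearMap.neg_apply,
        hA0, hA1, hA2, hA3, hA4, hA5, map_add, map_smul, smul_smul, Module.Basis.coord_apply,
        Module.Basis.repr_self, Finsupp.single_apply, Nat.factorial]
      ring
    have key2 : (e.coord 4) ((expNil (-A)) (e 2)) = c₂ * c₃ * x0 ^ 2 / 2 := by
      rw [hexp]
      simp [Finset.sum_range_succ, pow_succ, Module.End.mul_apply, LinearMap.neg_apply,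
        hA0, hA1, hA2, hA3, hA4, hA5, map_add, map_smul, smul_smul, Module.Basis.coord_apply,
        Module.Basis.repr_self, Finsupp.single_apply, Nat.factorial]
      ring
    have key3 : (e.coord 4) ((expNil (-A)) (e 3)) = -(c₃ * x0) := by
      rw [hexp]
      simp [Finset.sum_range_succ, pow_succ, Module.End.mul_apply, LinearMap.neg_apply,
        hA0, hA1, hA2, hA3, hA4, hA5, map_add, map_smul, smul_smul, Module.Basis.coord_apply,
        Module.Basis.repr_self, Finsupp.single_apply, Nat.factorial]
    have key4 : (e.coord 4) ((expNil (-A)) (e 4)) = 1 := by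
      rw [hexp]
      simp [Finset.sum_range_succ, pow_succ, Module.End.mul_apply, LinearMap.neg_apply,
        hA0, hA1, hA2, hA3, hA4, hA5, map_add, map_smul, smul_smul, Module.Basis.coord_apply,
        Module.Basis.repr_self, Finsupp.single_apply, Nat.factorial]
    have key5 : (e.coord 4) ((expNil (-A)) (e 5)) = 0 := by
      rw [hexp]
      simp [Finset.sum_range_succ, pow_succ, Module.End.mul_apply, LinearMap.neg_apply,
        hA0, hA1, hA2, hA3, hA4, hA5, map_add, map_smul, smul_smul, Module.Basis.coord_apply,
        Module.Basis.repr_self, Finsupp.single_apply, Nat.factorial]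
    refine ⟨?_, ?_, ?_, ?_, ?_, ?_⟩ <;>
      rw [LinearMap.comp_apply, Finset.sum_singleton, LinearMap.smul_apply, smul_eq_mul]
    · rw [key0]
    · rw [key1]
    · rw [key2]
    · rw [key3]
    · rw [key4, mul_one]
    · rw [key5, mul_zero]
  constructor
  · rintro ⟨x, hlam⟩
    obtain ⟨k0, k1, k2, k3, k4, k5⟩ := main x
    rw [hlam, k1, k2, k3, k4, k5]
    refine ⟨rfl, rfl, by ring, by ring⟩
  · rintro ⟨hl4, hl5, hp1, hp2⟩
    refine ⟨(-(lam (e 3)) / (c₃ * ξ 4)) • e 0 + (lam (e 0) / (c₃ * ξ 4)) • e 3, ?_⟩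
    set x : n := (-(lam (e 3)) / (c₃ * ξ 4)) • e 0 + (lam (e 0) / (c₃ * ξ 4)) • e 3 with hxdef
    obtain ⟨k0, k1, k2, k3, k4, k5⟩ := main x
    have r0 : e.repr x 0 = -(lam (e 3)) / (c₃ * ξ 4) := by
      rw [hxdef]; simp [Module.Basis.repr_self, Finsupp.single_apply]
    have r1 : e.repr x 1 = 0 := by
      rw [hxdef]; simp [Module.Basis.repr_self, Finsupp.single_apply]
    have r2 : e.repr x 2 = 0 := by
      rw [hxdef]; simp [Module.Basis.repr_self, Finsupp.single_apply]
    have r3 : e.repr x 3 = lam (e 0) / (c₃ * ξ 4) := by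
      rw [hxdef]; simp [Module.Basis.repr_self, Finsupp.single_apply]
    simp only [r0, r1, r2, r3] at k0 k1 k2 k3
    have h6 : ∀ i : Fin 6, i = 0 ∨ i = 1 ∨ i = 2 ∨ i = 3 ∨ i = 4 ∨ i = 5 := by decide
    apply Module.Basis.ext e
    intro i
    rcases h6 i with rfl | rfl | rfl | rfl | rfl | rfl
    · rw [k0]; field_simp; ring
    · have e1eq : lam (e 1) = c₁ * c₂ * lam (e 3) ^ 3 / (6 * c₃ ^ 2 * ξ 4 ^ 2) := by
        rw [hl4] at hp1
        field_simp
        linear_combination hp1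
      rw [k1, e1eq]; field_simp
    · have e2eq : lam (e 2) = c₂ * lam (e 3) ^ 2 / (2 * c₃ * ξ 4) := by
        rw [hl4] at hp2
        field_simp
        linear_combination hp2
      rw [k2, e2eq]; field_simp
    · rw [k3]; field_simp
    · rw [k4]; exact hl4
    · rw [k5]; exact hl5
end

section
/- Let ξ:{3α+2β}→ℂ∖{0} be a map. A linear form λ∈𝔫* belongs to the coadjoint orbit Ω_{{3α+2β},ξ} if and only if λ_{3α+2β}=ξ(3α+2β) and 2c₅λ_αλ_{3α+2β} − 2c₃λ_{α+β}λ_{3α+β} + c₂λ_{2α+β}² = 0 (with λ_β, λ_{α+β}, λ_{2α+β}, λ_{3α+β} arbitrary). -/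
open scoped RealInnerProductSpace

lemma expNil_eq_of_pow {M : Type*} [AddCommGroup M] [Module ℂ M] (A : Module.End ℂ M)
    (m : ℕ) (h : A ^ m = 0) :
    expNil A = ∑ k ∈ Finset.range m, (k.factorial : ℂ)⁻¹ • A ^ k := by
  have hc : nilpotencyClass A ≤ m := Nat.sInf_le h
  rw [expNil]
  apply Finset.sum_subset (Finset.range_subset_range.mpr hc)
  intro k _ hk
  have hz : A ^ k = 0 :=
    pow_eq_zero_of_le (le_of_not_gt (by simpa using hk)) (pow_nilpotencyClass ⟨m, h⟩)
  rw [hz, smul_zero]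

set_option maxHeartbeats 2000000 in
theorem stmt4 {n : Type*} [LieRing n] [LieAlgebra ℂ n]
    (α β : EuclideanSpace ℝ (Fin 2))
    (hαα : ⟪α, α⟫ = 1) (hββ : ⟪β, β⟫ = 3) (hαβ : ⟪α, β⟫ = -(3/2))
    -- the six positive roots of `G₂`: `α, β, α+β, 2α+β, 3α+β, 3α+2β`, indexed by `Fin 6`
    (root : Fin 6 → EuclideanSpace ℝ (Fin 2))
    (hroot : root = ![α, β, α + β, (2:ℝ) • α + β, (3:ℝ) • α + β, (3:ℝ) • α + (2:ℝ) • β])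
    (c₁ c₂ c₃ c₄ c₅ : ℂ)
    (hc₁ : c₁ ≠ 0) (hc₂ : c₂ ≠ 0) (hc₃ : c₃ ≠ 0) (hc₄ : c₄ ≠ 0) (hc₅ : c₅ ≠ 0)
    (e : Module.Basis (Fin 6) ℂ n)
    (h01 : ⁅e 0, e 1⁆ = c₁ • e 2)
    (h02 : ⁅e 0, e 2⁆ = c₂ • e 3)
    (h03 : ⁅e 0, e 3⁆ = c₃ • e 4)
    (h41 : ⁅e 4, e 1⁆ = c₄ • e 5)
    (h23 : ⁅e 2, e 3⁆ = c₅ • e 5)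
    (h0 : ∀ i j : Fin 6, root i + root j ∉ Set.range root → ⁅e i, e j⁆ = 0)
    (hnil : ∀ x : n, IsNilpotent (LieAlgebra.ad ℂ n x))
    (ξ : Fin 6 → ℂ) (hξ : ξ 5 ≠ 0)
    (lam : Module.Dual ℂ n) :
    lam ∈ coadjointOrbit e {5} ξ ↔
      (lam (e 5) = ξ 5 ∧
        2 * c₅ * lam (e 0) * lam (e 5) - 2 * c₃ * lam (e 2) * lam (e 4) +
          c₂ * lam (e 3) ^ 2 = 0) := by
  subst hroot
  -- geometry of the root system
  have hβα : ⟪β, α⟫ = -(3/2) := by rw [real_inner_comm]; exact hαβ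
  have Q : ∀ a b : ℝ, ⟪a • α + b • β, a • α + b • β⟫ = a^2 - 3*(a*b) + 3*b^2 := by
    intro a b
    simp only [inner_add_left, inner_add_right, real_inner_smul_left, real_inner_smul_right,
      hαα, hββ, hαβ, hβα]
    ring
  have nm : ∀ a b : ℝ, a^2 - 3*(a*b) + 3*b^2 ≠ 1 → a^2 - 3*(a*b) + 3*b^2 ≠ 3 →
      (a • α + b • β) ∉
        Set.range ![α, β, α + β, (2:ℝ) • α + β, (3:ℝ) • α + β, (3:ℝ) • α + (2:ℝ) • β] := by
    rintro a b h1 h3 ⟨k, hk⟩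
    have hq := Q a b
    fin_cases k <;> simp only [show ((⟨0,by norm_num⟩:Fin 6))=0 from rfl,
      show ((⟨1,by norm_num⟩:Fin 6))=1 from rfl, show ((⟨2,by norm_num⟩:Fin 6))=2 from rfl,
      show ((⟨3,by norm_num⟩:Fin 6))=3 from rfl, show ((⟨4,by norm_num⟩:Fin 6))=4 from rfl,
      show ((⟨5,by norm_num⟩:Fin 6))=5 from rfl, Matrix.cons_val_zero, Matrix.cons_val_one,
      Matrix.head_cons, Matrix.cons_val_two, Matrix.tail_cons, Matrix.cons_val_three,
      Matrix.cons_val_four, Matrix.cons_val_fin_one, Fin.isValue] at hk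
    · rw [← hk, hαα] at hq; exact h1 hq.symm
    · rw [← hk, hββ] at hq; exact h3 hq.symm
    · have := Q 1 1; simp only [one_smul] at this; rw [← hk, this] at hq; exact h1 (by linarith)
    · have := Q 2 1; simp only [one_smul] at this; rw [← hk, this] at hq; exact h1 (by linarith)
    · have := Q 3 1; simp only [one_smul] at this; rw [← hk, this] at hq; exact h3 (by linarith)
    · have hk' : (3:ℝ)•α+(2:ℝ)•β = a•α+b•β := hk
      have := Q 3 2; rw [hk', Q] at this; exact h3 (by linarith)
  -- vanishing brackets
  have mk0 : ∀ (i j : Fin 6) (a b : ℝ),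
      (![α, β, α + β, (2:ℝ) • α + β, (3:ℝ) • α + β, (3:ℝ) • α + (2:ℝ) • β] i
        + ![α, β, α + β, (2:ℝ) • α + β, (3:ℝ) • α + β, (3:ℝ) • α + (2:ℝ) • β] j
        = a • α + b • β) →
      a^2 - 3*(a*b) + 3*b^2 ≠ 1 → a^2 - 3*(a*b) + 3*b^2 ≠ 3 → ⁅e i, e j⁆ = 0 := by
    intro i j a b hab h1 h3
    exact h0 i j (by rw [hab]; exact nm a b h1 h3)
  have z04 : ⁅e 0, e 4⁆ = 0 := mk0 0 4 4 1
    (by show α + ((3:ℝ) • α + β) = _; module) (by norm_num) (by norm_num)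
  have z05 : ⁅e 0, e 5⁆ = 0 := mk0 0 5 4 2
    (by show α + ((3:ℝ) • α + (2:ℝ) • β) = _; module) (by norm_num) (by norm_num)
  have z12 : ⁅e 1, e 2⁆ = 0 := mk0 1 2 1 2
    (by show β + (α + β) = _; module) (by norm_num) (by norm_num)
  have z13 : ⁅e 1, e 3⁆ = 0 := mk0 1 3 2 2
    (by show β + ((2:ℝ) • α + β) = _; module) (by norm_num) (by norm_num)
  have z15 : ⁅e 1, e 5⁆ = 0 := mk0 1 5 3 3
    (by show β + ((3:ℝ) • α + (2:ℝ) • β) = _; module) (by norm_num) (by norm_num)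
  have z24 : ⁅e 2, e 4⁆ = 0 := mk0 2 4 4 2
    (by show (α + β) + ((3:ℝ) • α + β) = _; module) (by norm_num) (by norm_num)
  have z25 : ⁅e 2, e 5⁆ = 0 := mk0 2 5 4 3
    (by show (α + β) + ((3:ℝ) • α + (2:ℝ) • β) = _; module) (by norm_num) (by norm_num)
  have z34 : ⁅e 3, e 4⁆ = 0 := mk0 3 4 5 2
    (by show ((2:ℝ) • α + β) + ((3:ℝ) • α + β) = _; module) (by norm_num) (by norm_num)
  have z35 : ⁅e 3, e 5⁆ = 0 := mk0 3 5 5 3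
    (by show ((2:ℝ) • α + β) + ((3:ℝ) • α + (2:ℝ) • β) = _; module) (by norm_num) (by norm_num)
  have z45 : ⁅e 4, e 5⁆ = 0 := mk0 4 5 6 3
    (by show ((3:ℝ) • α + β) + ((3:ℝ) • α + (2:ℝ) • β) = _; module) (by norm_num) (by norm_num)
  have z55 : ⁅e 5, e 5⁆ = 0 := lie_self _
  have h10 : ⁅e 1, e 0⁆ = -(c₁ • e 2) := by rw [← lie_skew, h01]
  have h20 : ⁅e 2, e 0⁆ = -(c₂ • e 3) := by rw [← lie_skew, h02]
  have h30 : ⁅e 3, e 0⁆ = -(c₃ • e 4) := by rw [← lie_skew, h03]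
  have h14 : ⁅e 1, e 4⁆ = -(c₄ • e 5) := by rw [← lie_skew, h41]
  have h32 : ⁅e 3, e 2⁆ = -(c₅ • e 5) := by rw [← lie_skew, h23]
  have z21 : ⁅e 2, e 1⁆ = 0 := by rw [← lie_skew, z12, neg_zero]
  have z31 : ⁅e 3, e 1⁆ = 0 := by rw [← lie_skew, z13, neg_zero]
  have z40 : ⁅e 4, e 0⁆ = 0 := by rw [← lie_skew, z04, neg_zero]
  have z42 : ⁅e 4, e 2⁆ = 0 := by rw [← lie_skew, z24, neg_zero]
  have z43 : ⁅e 4, e 3⁆ = 0 := by rw [← lie_skew, z34, neg_zero]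
  have z50 : ⁅e 5, e 0⁆ = 0 := by rw [← lie_skew, z05, neg_zero]
  have z51 : ⁅e 5, e 1⁆ = 0 := by rw [← lie_skew, z15, neg_zero]
  have z52 : ⁅e 5, e 2⁆ = 0 := by rw [← lie_skew, z25, neg_zero]
  have z53 : ⁅e 5, e 3⁆ = 0 := by rw [← lie_skew, z35, neg_zero]
  have z54 : ⁅e 5, e 4⁆ = 0 := by rw [← lie_skew, z45, neg_zero]
  -- the Jacobi identity forces `c₁ c₅ = c₃ c₄`
  have hc : c₁ * c₅ = c₃ * c₄ := by
    have hj : ⁅⁅e 0, e 1⁆, e 3⁆ = ⁅e 0, ⁅e 1, e 3⁆⁆ - ⁅e 1, ⁅e 0, e 3⁆⁆ := lie_lie _ _ _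
    rw [h01, h03, z13, lie_zero, smul_lie, h23, lie_smul, h14, zero_sub, smul_smul,
      smul_neg, smul_smul, neg_neg] at hj
    have hz : (c₁ * c₅ - c₃ * c₄) • e 5 = 0 := by rw [sub_smul, hj, sub_self]
    have := (smul_eq_zero.mp hz).resolve_right (e.ne_zero 5)
    linear_combination this
  -- the main computation: value of `f ∘ exp(-ad x)` on the basis
  have key : ∀ t : Fin 6 → ℂ,
      (((∑ j ∈ ({5} : Finset (Fin 6)), ξ j • e.coord j).comp
        (expNil (-(LieAlgebra.ad ℂ n
          (t 0 • e 0 + t 1 • e 1 + t 2 • e 2 + t 3 • e 3 + t 4 • e 4 + t 5 • e 5))))) (e 0) =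
        ξ 5 * ((c₁*c₅ + c₃*c₄)*(t 1*t 3)/2 - c₂*c₅*(t 2*t 2)/2
          + (c₁*c₂*c₅ - c₂*c₃*c₄)*(t 0*t 1*t 2)/6 + c₁*c₂*c₃*c₄*(t 0*t 0*t 1*t 1)/24)) ∧
      (((∑ j ∈ ({5} : Finset (Fin 6)), ξ j • e.coord j).comp
        (expNil (-(LieAlgebra.ad ℂ n
          (t 0 • e 0 + t 1 • e 1 + t 2 • e 2 + t 3 • e 3 + t 4 • e 4 + t 5 • e 5))))) (e 1) =
        ξ 5 * (-(c₄*t 4) - c₁*c₅*(t 0*t 3)/2 - c₁*c₂*c₅*(t 0*t 0*t 2)/6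
          - c₁*c₂*c₃*c₄*(t 0*t 0*t 0*t 1)/24)) ∧
      (((∑ j ∈ ({5} : Finset (Fin 6)), ξ j • e.coord j).comp
        (expNil (-(LieAlgebra.ad ℂ n
          (t 0 • e 0 + t 1 • e 1 + t 2 • e 2 + t 3 • e 3 + t 4 • e 4 + t 5 • e 5))))) (e 2) =
        ξ 5 * (c₅*t 3 + c₂*c₅*(t 0*t 2)/2 + c₂*c₃*c₄*(t 0*t 0*t 1)/6)) ∧
      (((∑ j ∈ ({5} : Finset (Fin 6)), ξ j • e.coord j).comp
        (expNil (-(LieAlgebra.ad ℂ n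
          (t 0 • e 0 + t 1 • e 1 + t 2 • e 2 + t 3 • e 3 + t 4 • e 4 + t 5 • e 5))))) (e 3) =
        ξ 5 * (-(c₅*t 2) - c₃*c₄*(t 0*t 1)/2)) ∧
      (((∑ j ∈ ({5} : Finset (Fin 6)), ξ j • e.coord j).comp
        (expNil (-(LieAlgebra.ad ℂ n
          (t 0 • e 0 + t 1 • e 1 + t 2 • e 2 + t 3 • e 3 + t 4 • e 4 + t 5 • e 5))))) (e 4) =
        ξ 5 * (c₄*t 1)) ∧
      (((∑ j ∈ ({5} : Finset (Fin 6)), ξ j • e.coord j).comp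
        (expNil (-(LieAlgebra.ad ℂ n
          (t 0 • e 0 + t 1 • e 1 + t 2 • e 2 + t 3 • e 3 + t 4 • e 4 + t 5 • e 5))))) (e 5) =
        ξ 5) := by
    intro t
    set x : n := t 0 • e 0 + t 1 • e 1 + t 2 • e 2 + t 3 • e 3 + t 4 • e 4 + t 5 • e 5 with hxdef
    set A : Module.End ℂ n := -(LieAlgebra.ad ℂ n x) with hAdef
    have hA : ∀ v : n, A v = ⁅v, x⁆ := by
      intro v
      rw [hAdef]
      show -(LieAlgebra.ad ℂ n x v) = _
      rw [LieAlgebra.ad_apply, lie_skew]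
    have a0 : A (e 0) = (c₁ * t 1) • e 2 + (c₂ * t 2) • e 3 + (c₃ * t 3) • e 4 := by
      rw [hA, hxdef]
      simp only [lie_add, lie_smul, lie_self, h01, h02, h03, z04, z05,
        smul_zero, add_zero, zero_add, smul_smul]
      module
    have a1 : A (e 1) = (-(c₁ * t 0)) • e 2 + (-(c₄ * t 4)) • e 5 := by
      rw [hA, hxdef]
      simp only [lie_add, lie_smul, lie_self, h10, z12, z13, h14, z15,
        smul_zero, add_zero, zero_add, smul_neg, smul_smul]
      module
    have a2 : A (e 2) = (-(c₂ * t 0)) • e 3 + (c₅ * t 3) • e 5 := by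
      rw [hA, hxdef]
      simp only [lie_add, lie_smul, lie_self, h20, z21, h23, z24, z25,
        smul_zero, add_zero, zero_add, smul_neg, smul_smul]
      module
    have a3 : A (e 3) = (-(c₃ * t 0)) • e 4 + (-(c₅ * t 2)) • e 5 := by
      rw [hA, hxdef]
      simp only [lie_add, lie_smul, lie_self, h30, z31, h32, z34, z35,
        smul_zero, add_zero, zero_add, smul_neg, smul_smul]
      module
    have a4 : A (e 4) = (c₄ * t 1) • e 5 := by
      rw [hA, hxdef]
      simp only [lie_add, lie_smul, lie_self, z40, h41, z42, z43, z45,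
        smul_zero, add_zero, zero_add, smul_smul]
      module
    have a5 : A (e 5) = 0 := by
      rw [hA, hxdef]
      simp only [lie_add, lie_smul, lie_self, z50, z51, z52, z53, z54,
        smul_zero, add_zero, zero_add]
    have h5pow : A ^ 5 = 0 := by
      have hp : ∀ v : n, (A ^ 5) v = A (A (A (A (A v)))) := by
        intro v; simp [pow_succ, Module.End.mul_apply]
      refine e.ext fun i => ?_
      have hz : ∀ i : Fin 6, A (A (A (A (A (e i))))) = 0 := by
        have q0 : A (A (A (A (A (e 0))))) = 0 := by
          rw [a0]; simp only [map_add, map_smul, map_zero, a2, a3, a4, a5, smul_zero, add_zero, zero_add,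
            smul_add, smul_neg]
        have q1 : A (A (A (A (A (e 1))))) = 0 := by
          rw [a1]; simp only [map_add, map_smul, map_neg, map_zero, a2, a3, a4, a5, smul_zero, add_zero,
            zero_add, neg_zero, smul_add, smul_neg, neg_neg, neg_add]
        have q2 : A (A (A (A (A (e 2))))) = 0 := by
          rw [a2]; simp only [map_add, map_smul, map_neg, map_zero, a3, a4, a5, smul_zero, add_zero,
            zero_add, neg_zero, smul_add, smul_neg, neg_neg, neg_add]
        have q3 : A (A (A (A (A (e 3))))) = 0 := by
          rw [a3]; simp only [map_add, map_smul, map_neg, map_zero, a4, a5, smul_zero, add_zero,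
            zero_add, neg_zero, smul_add, smul_neg, neg_neg, neg_add]
        have q4 : A (A (A (A (A (e 4))))) = 0 := by
          rw [a4]; simp only [map_smul, a5, smul_zero, map_zero]
        have q5 : A (A (A (A (A (e 5))))) = 0 := by
          rw [a5]; simp only [map_zero]
        intro i; fin_cases i
        · exact q0
        · exact q1
        · exact q2
        · exact q3
        · exact q4
        · exact q5
      rw [hp]
      simpa using hz i
    have hexp : ∀ v : n, expNil A v
        = v + A v + (2:ℂ)⁻¹ • A (A v) + (6:ℂ)⁻¹ • A (A (A v))
          + (24:ℂ)⁻¹ • A (A (A (A v))) := by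
      intro v
      rw [expNil_eq_of_pow A 5 h5pow]
      simp [Finset.sum_range_succ, pow_succ, Module.End.mul_apply, Nat.factorial,
        LinearMap.add_apply, LinearMap.smul_apply, Module.End.one_apply]
    have hco : ∀ j : Fin 6, e.coord 5 (e j) = if j = 5 then 1 else 0 := by
      intro j
      rw [Module.Basis.coord_apply, e.repr_self]
      exact Finsupp.single_apply
    have hf : (∑ j ∈ ({5} : Finset (Fin 6)), ξ j • e.coord j) = ξ 5 • e.coord 5 :=
      Finset.sum_singleton _ _
    refine ⟨?_, ?_, ?_, ?_, ?_, ?_⟩ <;>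
      rw [LinearMap.comp_apply, hf, hexp] <;>
      simp [a0, a1, a2, a3, a4, a5, map_add, map_smul, map_neg, smul_add, smul_smul, hco,
        smul_eq_mul] <;>
      try ring
  constructor
  · intro hmem
    simp only [coadjointOrbit, Set.mem_setOf_eq] at hmem
    obtain ⟨x, hx⟩ := hmem
    set t : Fin 6 → ℂ := fun j => e.repr x j with ht
    have hx6 : x = t 0 • e 0 + t 1 • e 1 + t 2 • e 2 + t 3 • e 3 + t 4 • e 4 + t 5 • e 5 := by
      simp only [ht]
      have := e.sum_repr x
      rw [Fin.sum_univ_six] at this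
      exact this.symm
    rw [hx6] at hx
    obtain ⟨k0, k1, k2, k3, k4, k5⟩ := key t
    rw [hx]
    refine ⟨k5, ?_⟩
    rw [k0, k2, k3, k4, k5]
    linear_combination (ξ 5^2*(c₅*(t 1*t 3) + c₂*c₅*(t 0*t 1*t 2)/3
      + c₂*c₃*c₄*(t 0*t 0*t 1*t 1)/12)) * hc
  · rintro ⟨h5l, hpoly⟩
    set t : Fin 6 → ℂ := ![0, lam (e 4)/(ξ 5*c₄), -(lam (e 3))/(ξ 5*c₅),
      lam (e 2)/(ξ 5*c₅), -(lam (e 1))/(ξ 5*c₄), 0] with ht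
    obtain ⟨k0, k1, k2, k3, k4, k5⟩ := key t
    clear key nm mk0 h0
    have ht0 : t 0 = 0 := rfl
    have ht1 : t 1 = lam (e 4)/(ξ 5*c₄) := rfl
    have ht2 : t 2 = -(lam (e 3))/(ξ 5*c₅) := rfl
    have ht3 : t 3 = lam (e 2)/(ξ 5*c₅) := rfl
    have ht4 : t 4 = -(lam (e 1))/(ξ 5*c₄) := rfl
    have val5 := k5.trans h5l.symm
    have val4 := k4.trans (show ξ 5 * (c₄*t 1) = lam (e 4) by rw [ht1]; field_simp)
    have val3 := k3.trans (show ξ 5 * (-(c₅*t 2) - c₃*c₄*(t 0*t 1)/2) = lam (e 3) by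
      rw [ht0, ht2]; field_simp; ring)
    have val2 := k2.trans (show ξ 5 * (c₅*t 3 + c₂*c₅*(t 0*t 2)/2 + c₂*c₃*c₄*(t 0*t 0*t 1)/6)
        = lam (e 2) by rw [ht0, ht3]; field_simp; ring)
    have val1 := k1.trans (show ξ 5 * (-(c₄*t 4) - c₁*c₅*(t 0*t 3)/2 - c₁*c₂*c₅*(t 0*t 0*t 2)/6
        - c₁*c₂*c₃*c₄*(t 0*t 0*t 0*t 1)/24) = lam (e 1) by rw [ht0, ht4]; field_simp; ring)
    have val0 := k0.trans (show ξ 5 * ((c₁*c₅ + c₃*c₄)*(t 1*t 3)/2 - c₂*c₅*(t 2*t 2)/2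
        + (c₁*c₂*c₅ - c₂*c₃*c₄)*(t 0*t 1*t 2)/6 + c₁*c₂*c₃*c₄*(t 0*t 0*t 1*t 1)/24)
        = lam (e 0) by
      rw [ht0, ht1, ht2, ht3]
      field_simp
      linear_combination (144*(lam (e 2)*lam (e 4)))*hc
        - (144*c₄)*hpoly + (288*c₄*c₅*lam (e 0))*h5l)
    simp only [coadjointOrbit, Set.mem_setOf_eq]
    refine ⟨t 0 • e 0 + t 1 • e 1 + t 2 • e 2 + t 3 • e 3 + t 4 • e 4 + t 5 • e 5, ?_⟩
    refine e.ext fun i => ?_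
    fin_cases i
    · exact val0.symm
    · exact val1.symm
    · exact val2.symm
    · exact val3.symm
    · exact val4.symm
    · exact val5.symm
end

section
/- Let D={β, 3α+β} and let ξ:D→ℂ∖{0} be a map. A linear form λ∈𝔫* belongs to the basic subvariety 𝒪_{D,ξ} if and only if λ_{3α+β}=ξ(3α+β), λ_{3α+2β}=0, 6c₃²λ_βλ_{3α+β}² − c₁c₂λ_{2α+β}³ = 6c₃²ξ(β)ξ(3α+β)², and 2c₃λ_{α+β}λ_{3α+β} − c₂λ_{2α+β}² = 0 (with λ_α arbitrary). -/
open scoped RealInnerProductSpace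

lemma expNil_eq5 {M : Type*} [AddCommGroup M] [Module ℂ M] (A : Module.End ℂ M)
    (h : A ^ 5 = 0) :
    expNil A = ∑ k ∈ Finset.range 5, (k.factorial : ℂ)⁻¹ • A ^ k := by
  have hN : nilpotencyClass A ≤ 5 := Nat.sInf_le h
  refine Finset.sum_subset (Finset.range_subset_range.mpr hN) ?_
  intro k _ hk'
  have hk : nilpotencyClass A ≤ k := by simpa using hk'
  have : A ^ k = 0 := by
    obtain ⟨d, rfl⟩ := Nat.exists_eq_add_of_le hk
    rw [pow_add, pow_nilpotencyClass ⟨5, h⟩, zero_mul]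
  simp [this]

set_option maxHeartbeats 1000000 in
lemma G2vals {n : Type*} [LieRing n] [LieAlgebra ℂ n]
    (c₁ c₂ c₃ c₄ c₅ : ℂ)
    (e : Module.Basis (Fin 6) ℂ n)
    (h01 : ⁅e 0, e 1⁆ = c₁ • e 2)
    (h02 : ⁅e 0, e 2⁆ = c₂ • e 3)
    (h03 : ⁅e 0, e 3⁆ = c₃ • e 4)
    (h41 : ⁅e 4, e 1⁆ = c₄ • e 5)
    (h23 : ⁅e 2, e 3⁆ = c₅ • e 5)
    (z04 : ⁅e 0, e 4⁆ = 0) (z05 : ⁅e 0, e 5⁆ = 0) (z12 : ⁅e 1, e 2⁆ = 0)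
    (z13 : ⁅e 1, e 3⁆ = 0) (z15 : ⁅e 1, e 5⁆ = 0) (z24 : ⁅e 2, e 4⁆ = 0)
    (z25 : ⁅e 2, e 5⁆ = 0) (z34 : ⁅e 3, e 4⁆ = 0) (z35 : ⁅e 3, e 5⁆ = 0)
    (z45 : ⁅e 4, e 5⁆ = 0) :
    (∀ x : n, e.repr (expNil (-(LieAlgebra.ad ℂ n x)) (e 0)) 1 = (0:ℂ)) ∧
    (∀ x : n, e.repr (expNil (-(LieAlgebra.ad ℂ n x)) (e 1)) 1 = (1:ℂ)) ∧
    (∀ x : n, e.repr (expNil (-(LieAlgebra.ad ℂ n x)) (e 2)) 1 = (0:ℂ)) ∧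
    (∀ x : n, e.repr (expNil (-(LieAlgebra.ad ℂ n x)) (e 3)) 1 = (0:ℂ)) ∧
    (∀ x : n, e.repr (expNil (-(LieAlgebra.ad ℂ n x)) (e 4)) 1 = (0:ℂ)) ∧
    (∀ x : n, e.repr (expNil (-(LieAlgebra.ad ℂ n x)) (e 5)) 1 = (0:ℂ)) ∧
    (∀ x : n, e.repr (expNil (-(LieAlgebra.ad ℂ n x)) (e 0)) 4
      = e.repr x 3 * c₃ - (2:ℂ)⁻¹ * (e.repr x 0 * e.repr x 2 * c₂ * c₃)
        + (6:ℂ)⁻¹ * (e.repr x 0 ^ 2 * e.repr x 1 * c₁ * c₂ * c₃)) ∧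
    (∀ x : n, e.repr (expNil (-(LieAlgebra.ad ℂ n x)) (e 1)) 4
      = -((6:ℂ)⁻¹ * (e.repr x 0 ^ 3 * c₁ * c₂ * c₃))) ∧
    (∀ x : n, e.repr (expNil (-(LieAlgebra.ad ℂ n x)) (e 2)) 4
      = (2:ℂ)⁻¹ * (e.repr x 0 ^ 2 * c₂ * c₃)) ∧
    (∀ x : n, e.repr (expNil (-(LieAlgebra.ad ℂ n x)) (e 3)) 4 = -(e.repr x 0 * c₃)) ∧
    (∀ x : n, e.repr (expNil (-(LieAlgebra.ad ℂ n x)) (e 4)) 4 = (1:ℂ)) ∧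
    (∀ x : n, e.repr (expNil (-(LieAlgebra.ad ℂ n x)) (e 5)) 4 = (0:ℂ)) := by
  have sk : ∀ (i j : Fin 6), ⁅e i, e j⁆ = 0 → ⁅e j, e i⁆ = 0 := by
    intro i j h; rw [← lie_skew, h, neg_zero]
  have n10 : ⁅e 1, e 0⁆ = -(c₁ • e 2) := by rw [← lie_skew, h01]
  have n20 : ⁅e 2, e 0⁆ = -(c₂ • e 3) := by rw [← lie_skew, h02]
  have n30 : ⁅e 3, e 0⁆ = -(c₃ • e 4) := by rw [← lie_skew, h03]
  have n14 : ⁅e 1, e 4⁆ = -(c₄ • e 5) := by rw [← lie_skew, h41]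
  have n32 : ⁅e 3, e 2⁆ = -(c₅ • e 5) := by rw [← lie_skew, h23]
  have z40 := sk _ _ z04
  have z50 := sk _ _ z05
  have z21 := sk _ _ z12
  have z31 := sk _ _ z13
  have z51 := sk _ _ z15
  have z42 := sk _ _ z24
  have z52 := sk _ _ z25
  have z43 := sk _ _ z34
  have z53 := sk _ _ z35
  have z54 := sk _ _ z45
  -- ### Step 3: action of -(ad x) on the basis
  have hA0 : ∀ x : n, (-(LieAlgebra.ad ℂ n x)) (e 0)
      = (e.repr x 1 * c₁) • e 2 + (e.repr x 2 * c₂) • e 3 + (e.repr x 3 * c₃) • e 4 := by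
    intro x
    rw [LinearMap.neg_apply, LieAlgebra.ad_apply]
    conv_lhs => rw [← e.sum_repr x, Fin.sum_univ_six]
    simp only [add_lie, smul_lie, lie_self, n10, n20, n30, z40, z50, smul_zero, smul_neg]
    module
  have hA1 : ∀ x : n, (-(LieAlgebra.ad ℂ n x)) (e 1)
      = -((e.repr x 0 * c₁) • e 2) - (e.repr x 4 * c₄) • e 5 := by
    intro x
    rw [LinearMap.neg_apply, LieAlgebra.ad_apply]
    conv_lhs => rw [← e.sum_repr x, Fin.sum_univ_six]
    simp only [add_lie, smul_lie, lie_self, h01, h41, z21, z31, z51, smul_zero]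
    module
  have hA2 : ∀ x : n, (-(LieAlgebra.ad ℂ n x)) (e 2)
      = -((e.repr x 0 * c₂) • e 3) + (e.repr x 3 * c₅) • e 5 := by
    intro x
    rw [LinearMap.neg_apply, LieAlgebra.ad_apply]
    conv_lhs => rw [← e.sum_repr x, Fin.sum_univ_six]
    simp only [add_lie, smul_lie, lie_self, h02, n32, z12, z42, z52, smul_zero, smul_neg]
    module
  have hA3 : ∀ x : n, (-(LieAlgebra.ad ℂ n x)) (e 3)
      = -((e.repr x 0 * c₃) • e 4) - (e.repr x 2 * c₅) • e 5 := by
    intro x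
    rw [LinearMap.neg_apply, LieAlgebra.ad_apply]
    conv_lhs => rw [← e.sum_repr x, Fin.sum_univ_six]
    simp only [add_lie, smul_lie, lie_self, h03, h23, z13, z43, z53, smul_zero]
    module
  have hA4 : ∀ x : n, (-(LieAlgebra.ad ℂ n x)) (e 4)
      = (e.repr x 1 * c₄) • e 5 := by
    intro x
    rw [LinearMap.neg_apply, LieAlgebra.ad_apply]
    conv_lhs => rw [← e.sum_repr x, Fin.sum_univ_six]
    simp only [add_lie, smul_lie, lie_self, n14, z04, z24, z34, z54, smul_zero, smul_neg]
    module
  have hA5 : ∀ x : n, (-(LieAlgebra.ad ℂ n x)) (e 5) = 0 := by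
    intro x
    rw [LinearMap.neg_apply, LieAlgebra.ad_apply]
    conv_lhs => rw [← e.sum_repr x, Fin.sum_univ_six]
    simp only [add_lie, smul_lie, lie_self, z05, z15, z25, z35, z45, smul_zero]
    simp
  -- ### Step 4: (-(ad x))^5 = 0
  have hpow5 : ∀ x : n, (-(LieAlgebra.ad ℂ n x)) ^ 5 = 0 := by
    intro x
    have k : ∀ j : Fin 6, ((-(LieAlgebra.ad ℂ n x)) ^ 5) (e j) = (0 : Module.End ℂ n) (e j) := by
      intro j
      simp only [pow_succ, pow_zero, one_mul, Module.End.mul_apply, LinearMap.zero_apply]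
      fin_cases j
      · show (-(LieAlgebra.ad ℂ n x)) ((-(LieAlgebra.ad ℂ n x)) ((-(LieAlgebra.ad ℂ n x)) ((-(LieAlgebra.ad ℂ n x)) ((-(LieAlgebra.ad ℂ n x)) (e 0))))) = 0
        rw [hA0]
        simp only [map_add, map_sub, map_neg, map_smul, hA2, hA3, hA4, hA5,
          smul_zero, neg_zero, add_zero, zero_add, sub_zero, zero_sub, smul_neg, neg_neg,
          smul_add, smul_sub, map_zero, sub_self]
      · show (-(LieAlgebra.ad ℂ n x)) ((-(LieAlgebra.ad ℂ n x)) ((-(LieAlgebra.ad ℂ n x)) ((-(LieAlgebra.ad ℂ n x)) ((-(LieAlgebra.ad ℂ n x)) (e 1))))) = 0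
        rw [hA1]
        simp only [map_add, map_sub, map_neg, map_smul, hA2, hA3, hA4, hA5,
          smul_zero, neg_zero, add_zero, zero_add, sub_zero, zero_sub, smul_neg, neg_neg,
          smul_add, smul_sub, map_zero, sub_self]
      · show (-(LieAlgebra.ad ℂ n x)) ((-(LieAlgebra.ad ℂ n x)) ((-(LieAlgebra.ad ℂ n x)) ((-(LieAlgebra.ad ℂ n x)) ((-(LieAlgebra.ad ℂ n x)) (e 2))))) = 0
        rw [hA2]
        simp only [map_add, map_sub, map_neg, map_smul, hA3, hA4, hA5,
          smul_zero, neg_zero, add_zero, zero_add, sub_zero, zero_sub, smul_neg, neg_neg,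
          smul_add, smul_sub, map_zero, sub_self]
      · show (-(LieAlgebra.ad ℂ n x)) ((-(LieAlgebra.ad ℂ n x)) ((-(LieAlgebra.ad ℂ n x)) ((-(LieAlgebra.ad ℂ n x)) ((-(LieAlgebra.ad ℂ n x)) (e 3))))) = 0
        rw [hA3]
        simp only [map_add, map_sub, map_neg, map_smul, hA4, hA5,
          smul_zero, neg_zero, add_zero, zero_add, sub_zero, zero_sub, smul_neg, neg_neg,
          smul_add, smul_sub, map_zero, sub_self]
      · show (-(LieAlgebra.ad ℂ n x)) ((-(LieAlgebra.ad ℂ n x)) ((-(LieAlgebra.ad ℂ n x)) ((-(LieAlgebra.ad ℂ n x)) ((-(LieAlgebra.ad ℂ n x)) (e 4))))) = 0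
        rw [hA4]
        simp only [map_add, map_sub, map_neg, map_smul, hA5,
          smul_zero, neg_zero, add_zero, zero_add, sub_zero, zero_sub, smul_neg, neg_neg,
          smul_add, smul_sub, map_zero, sub_self]
      · show (-(LieAlgebra.ad ℂ n x)) ((-(LieAlgebra.ad ℂ n x)) ((-(LieAlgebra.ad ℂ n x)) ((-(LieAlgebra.ad ℂ n x)) ((-(LieAlgebra.ad ℂ n x)) (e 5))))) = 0
        rw [hA5]
        simp only [map_zero]
    exact e.ext k
  -- ### Step 5: coordinates of expNil(-(ad x)) (e j)
  have v10 : ∀ x : n, e.repr (expNil (-(LieAlgebra.ad ℂ n x)) (e 0)) 1 = (0:ℂ) := by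
    intro x
    rw [expNil_eq5 _ (hpow5 x), LinearMap.sum_apply]
    simp only [Finset.sum_range_succ, Finset.sum_range_zero, LinearMap.smul_apply,
      pow_succ, pow_zero, one_mul, Module.End.mul_apply, Module.End.one_apply,
      hA0, hA1, hA2, hA3, hA4, hA5, map_add, map_sub, map_neg, map_smul, smul_zero, map_zero,
      zero_add, add_zero, neg_zero, sub_zero, zero_sub, smul_neg, neg_neg, smul_add, smul_sub]
    simp [Module.Basis.repr_self, Finsupp.single_apply, Nat.factorial, smul_smul]
    all_goals ring
  have v11 : ∀ x : n, e.repr (expNil (-(LieAlgebra.ad ℂ n x)) (e 1)) 1 = (1:ℂ) := by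
    intro x
    rw [expNil_eq5 _ (hpow5 x), LinearMap.sum_apply]
    simp only [Finset.sum_range_succ, Finset.sum_range_zero, LinearMap.smul_apply,
      pow_succ, pow_zero, one_mul, Module.End.mul_apply, Module.End.one_apply,
      hA0, hA1, hA2, hA3, hA4, hA5, map_add, map_sub, map_neg, map_smul, smul_zero, map_zero,
      zero_add, add_zero, neg_zero, sub_zero, zero_sub, smul_neg, neg_neg, smul_add, smul_sub]
    simp [Module.Basis.repr_self, Finsupp.single_apply, Nat.factorial, smul_smul]
    all_goals ring
  have v12 : ∀ x : n, e.repr (expNil (-(LieAlgebra.ad ℂ n x)) (e 2)) 1 = (0:ℂ) := by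
    intro x
    rw [expNil_eq5 _ (hpow5 x), LinearMap.sum_apply]
    simp only [Finset.sum_range_succ, Finset.sum_range_zero, LinearMap.smul_apply,
      pow_succ, pow_zero, one_mul, Module.End.mul_apply, Module.End.one_apply,
      hA0, hA1, hA2, hA3, hA4, hA5, map_add, map_sub, map_neg, map_smul, smul_zero, map_zero,
      zero_add, add_zero, neg_zero, sub_zero, zero_sub, smul_neg, neg_neg, smul_add, smul_sub]
    simp [Module.Basis.repr_self, Finsupp.single_apply, Nat.factorial, smul_smul]
    all_goals ring
  have v13 : ∀ x : n, e.repr (expNil (-(LieAlgebra.ad ℂ n x)) (e 3)) 1 = (0:ℂ) := by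
    intro x
    rw [expNil_eq5 _ (hpow5 x), LinearMap.sum_apply]
    simp only [Finset.sum_range_succ, Finset.sum_range_zero, LinearMap.smul_apply,
      pow_succ, pow_zero, one_mul, Module.End.mul_apply, Module.End.one_apply,
      hA0, hA1, hA2, hA3, hA4, hA5, map_add, map_sub, map_neg, map_smul, smul_zero, map_zero,
      zero_add, add_zero, neg_zero, sub_zero, zero_sub, smul_neg, neg_neg, smul_add, smul_sub]
    simp [Module.Basis.repr_self, Finsupp.single_apply, Nat.factorial, smul_smul]
    all_goals ring
  have v14 : ∀ x : n, e.repr (expNil (-(LieAlgebra.ad ℂ n x)) (e 4)) 1 = (0:ℂ) := by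
    intro x
    rw [expNil_eq5 _ (hpow5 x), LinearMap.sum_apply]
    simp only [Finset.sum_range_succ, Finset.sum_range_zero, LinearMap.smul_apply,
      pow_succ, pow_zero, one_mul, Module.End.mul_apply, Module.End.one_apply,
      hA0, hA1, hA2, hA3, hA4, hA5, map_add, map_sub, map_neg, map_smul, smul_zero, map_zero,
      zero_add, add_zero, neg_zero, sub_zero, zero_sub, smul_neg, neg_neg, smul_add, smul_sub]
    simp [Module.Basis.repr_self, Finsupp.single_apply, Nat.factorial, smul_smul]
    all_goals ring
  have v15 : ∀ x : n, e.repr (expNil (-(LieAlgebra.ad ℂ n x)) (e 5)) 1 = (0:ℂ) := by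
    intro x
    rw [expNil_eq5 _ (hpow5 x), LinearMap.sum_apply]
    simp only [Finset.sum_range_succ, Finset.sum_range_zero, LinearMap.smul_apply,
      pow_succ, pow_zero, one_mul, Module.End.mul_apply, Module.End.one_apply,
      hA0, hA1, hA2, hA3, hA4, hA5, map_add, map_sub, map_neg, map_smul, smul_zero, map_zero,
      zero_add, add_zero, neg_zero, sub_zero, zero_sub, smul_neg, neg_neg, smul_add, smul_sub]
    simp [Module.Basis.repr_self, Finsupp.single_apply, Nat.factorial, smul_smul]
    all_goals ring
  have v40 : ∀ x : n, e.repr (expNil (-(LieAlgebra.ad ℂ n x)) (e 0)) 4 = e.repr x 3 * c₃ - (2:ℂ)⁻¹ * (e.repr x 0 * e.repr x 2 * c₂ * c₃) + (6:ℂ)⁻¹ * (e.repr x 0 ^ 2 * e.repr x 1 * c₁ * c₂ * c₃) := by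
    intro x
    rw [expNil_eq5 _ (hpow5 x), LinearMap.sum_apply]
    simp only [Finset.sum_range_succ, Finset.sum_range_zero, LinearMap.smul_apply,
      pow_succ, pow_zero, one_mul, Module.End.mul_apply, Module.End.one_apply,
      hA0, hA1, hA2, hA3, hA4, hA5, map_add, map_sub, map_neg, map_smul, smul_zero, map_zero,
      zero_add, add_zero, neg_zero, sub_zero, zero_sub, smul_neg, neg_neg, smul_add, smul_sub]
    simp [Module.Basis.repr_self, Finsupp.single_apply, Nat.factorial, smul_smul]
    all_goals ring
  have v41 : ∀ x : n, e.repr (expNil (-(LieAlgebra.ad ℂ n x)) (e 1)) 4 = -((6:ℂ)⁻¹ * (e.repr x 0 ^ 3 * c₁ * c₂ * c₃)) := by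
    intro x
    rw [expNil_eq5 _ (hpow5 x), LinearMap.sum_apply]
    simp only [Finset.sum_range_succ, Finset.sum_range_zero, LinearMap.smul_apply,
      pow_succ, pow_zero, one_mul, Module.End.mul_apply, Module.End.one_apply,
      hA0, hA1, hA2, hA3, hA4, hA5, map_add, map_sub, map_neg, map_smul, smul_zero, map_zero,
      zero_add, add_zero, neg_zero, sub_zero, zero_sub, smul_neg, neg_neg, smul_add, smul_sub]
    simp [Module.Basis.repr_self, Finsupp.single_apply, Nat.factorial, smul_smul]
    all_goals ring
  have v42 : ∀ x : n, e.repr (expNil (-(LieAlgebra.ad ℂ n x)) (e 2)) 4 = (2:ℂ)⁻¹ * (e.repr x 0 ^ 2 * c₂ * c₃) := by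
    intro x
    rw [expNil_eq5 _ (hpow5 x), LinearMap.sum_apply]
    simp only [Finset.sum_range_succ, Finset.sum_range_zero, LinearMap.smul_apply,
      pow_succ, pow_zero, one_mul, Module.End.mul_apply, Module.End.one_apply,
      hA0, hA1, hA2, hA3, hA4, hA5, map_add, map_sub, map_neg, map_smul, smul_zero, map_zero,
      zero_add, add_zero, neg_zero, sub_zero, zero_sub, smul_neg, neg_neg, smul_add, smul_sub]
    simp [Module.Basis.repr_self, Finsupp.single_apply, Nat.factorial, smul_smul]
    all_goals ring
  have v43 : ∀ x : n, e.repr (expNil (-(LieAlgebra.ad ℂ n x)) (e 3)) 4 = -(e.repr x 0 * c₃) := by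
    intro x
    rw [expNil_eq5 _ (hpow5 x), LinearMap.sum_apply]
    simp only [Finset.sum_range_succ, Finset.sum_range_zero, LinearMap.smul_apply,
      pow_succ, pow_zero, one_mul, Module.End.mul_apply, Module.End.one_apply,
      hA0, hA1, hA2, hA3, hA4, hA5, map_add, map_sub, map_neg, map_smul, smul_zero, map_zero,
      zero_add, add_zero, neg_zero, sub_zero, zero_sub, smul_neg, neg_neg, smul_add, smul_sub]
    simp [Module.Basis.repr_self, Finsupp.single_apply, Nat.factorial, smul_smul]
    all_goals ring
  have v44 : ∀ x : n, e.repr (expNil (-(LieAlgebra.ad ℂ n x)) (e 4)) 4 = (1:ℂ) := by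
    intro x
    rw [expNil_eq5 _ (hpow5 x), LinearMap.sum_apply]
    simp only [Finset.sum_range_succ, Finset.sum_range_zero, LinearMap.smul_apply,
      pow_succ, pow_zero, one_mul, Module.End.mul_apply, Module.End.one_apply,
      hA0, hA1, hA2, hA3, hA4, hA5, map_add, map_sub, map_neg, map_smul, smul_zero, map_zero,
      zero_add, add_zero, neg_zero, sub_zero, zero_sub, smul_neg, neg_neg, smul_add, smul_sub]
    simp [Module.Basis.repr_self, Finsupp.single_apply, Nat.factorial, smul_smul]
    all_goals ring
  have v45 : ∀ x : n, e.repr (expNil (-(LieAlgebra.ad ℂ n x)) (e 5)) 4 = (0:ℂ) := by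
    intro x
    rw [expNil_eq5 _ (hpow5 x), LinearMap.sum_apply]
    simp only [Finset.sum_range_succ, Finset.sum_range_zero, LinearMap.smul_apply,
      pow_succ, pow_zero, one_mul, Module.End.mul_apply, Module.End.one_apply,
      hA0, hA1, hA2, hA3, hA4, hA5, map_add, map_sub, map_neg, map_smul, smul_zero, map_zero,
      zero_add, add_zero, neg_zero, sub_zero, zero_sub, smul_neg, neg_neg, smul_add, smul_sub]
    simp [Module.Basis.repr_self, Finsupp.single_apply, Nat.factorial, smul_smul]
    all_goals ring
  exact ⟨v10, v11, v12, v13, v14, v15, v40, v41, v42, v43, v44, v45⟩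

open scoped RealInnerProductSpace in
set_option maxHeartbeats 1000000 in
lemma G2zeros {n : Type*} [LieRing n] [LieAlgebra ℂ n]
    (α β : EuclideanSpace ℝ (Fin 2))
    (hαα : ⟪α, α⟫ = 1) (hββ : ⟪β, β⟫ = 3) (hαβ : ⟪α, β⟫ = -(3/2))
    (root : Fin 6 → EuclideanSpace ℝ (Fin 2))
    (hroot : root = ![α, β, α + β, (2:ℝ) • α + β, (3:ℝ) • α + β, (3:ℝ) • α + (2:ℝ) • β])
    (e : Module.Basis (Fin 6) ℂ n)
    (h0 : ∀ i j : Fin 6, root i + root j ∉ Set.range root → ⁅e i, e j⁆ = 0) :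
    ⁅e 0, e 4⁆ = 0 ∧ ⁅e 0, e 5⁆ = 0 ∧ ⁅e 1, e 2⁆ = 0 ∧ ⁅e 1, e 3⁆ = 0 ∧ ⁅e 1, e 5⁆ = 0 ∧
    ⁅e 2, e 4⁆ = 0 ∧ ⁅e 2, e 5⁆ = 0 ∧ ⁅e 3, e 4⁆ = 0 ∧ ⁅e 3, e 5⁆ = 0 ∧ ⁅e 4, e 5⁆ = 0 := by
  -- ### Step 1: linear independence of α and β
  have hind : ∀ a b : ℝ, a • α + b • β = 0 → a = 0 ∧ b = 0 := by
    intro a b h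
    have hsym : ⟪β,α⟫ = ⟪α,β⟫ := real_inner_comm α β
    have h1 : a * ⟪α,α⟫ + b * ⟪β,α⟫ = 0 := by
      rw [← real_inner_smul_left, ← real_inner_smul_left, ← inner_add_left, h, inner_zero_left]
    have h2 : a * ⟪α,β⟫ + b * ⟪β,β⟫ = 0 := by
      rw [← real_inner_smul_left, ← real_inner_smul_left, ← inner_add_left, h, inner_zero_left]
    rw [hαα, hsym, hαβ] at h1
    rw [hαβ, hββ] at h2
    constructor <;> nlinarith [h1, h2]
  have key : ∀ a b c d : ℝ, a • α + b • β = c • α + d • β → a = c ∧ b = d := by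
    intro a b c d h
    have h' := hind (a-c) (b-d) (by linear_combination (norm := module) h)
    exact ⟨by linarith [h'.1], by linarith [h'.2]⟩
  have hnr : ∀ a b : ℝ, (a,b) ≠ (1,0) → (a,b) ≠ (0,1) → (a,b) ≠ (1,1) → (a,b) ≠ (2,1) →
      (a,b) ≠ (3,1) → (a,b) ≠ (3,2) →
      a • α + b • β ∉ Set.range root := by
    intro a b n1 n2 n3 n4 n5 n6 hmem
    rw [hroot] at hmem
    simp only [Matrix.range_cons, Matrix.range_empty, Set.union_empty, Set.mem_union,
      Set.mem_singleton_iff] at hmem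
    rcases hmem with hk|hk|hk|hk|hk|hk
    · exact n1 (Prod.ext_iff.mpr (key a b 1 0 (by linear_combination (norm := module) hk)))
    · exact n2 (Prod.ext_iff.mpr (key a b 0 1 (by linear_combination (norm := module) hk)))
    · exact n3 (Prod.ext_iff.mpr (key a b 1 1 (by linear_combination (norm := module) hk)))
    · exact n4 (Prod.ext_iff.mpr (key a b 2 1 (by linear_combination (norm := module) hk)))
    · exact n5 (Prod.ext_iff.mpr (key a b 3 1 (by linear_combination (norm := module) hk)))
    · exact n6 (Prod.ext_iff.mpr (key a b 3 2 (by linear_combination (norm := module) hk)))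
  -- ### Step 2: the vanishing brackets
  have z04 : ⁅e 0, e 4⁆ = 0 := by
    refine h0 0 4 ?_
    rw [show root 0 + root 4 = (4:ℝ) • α + (1:ℝ) • β from by
      rw [hroot]; show α + ((3:ℝ) • α + β) = _; module]
    exact hnr 4 1 (by norm_num [Prod.ext_iff]) (by norm_num [Prod.ext_iff])
      (by norm_num [Prod.ext_iff]) (by norm_num [Prod.ext_iff])
      (by norm_num [Prod.ext_iff]) (by norm_num [Prod.ext_iff])
  have z05 : ⁅e 0, e 5⁆ = 0 := by
    refine h0 0 5 ?_
    rw [show root 0 + root 5 = (4:ℝ) • α + (2:ℝ) • β from by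
      rw [hroot]; show α + ((3:ℝ) • α + (2:ℝ) • β) = _; module]
    exact hnr 4 2 (by norm_num [Prod.ext_iff]) (by norm_num [Prod.ext_iff])
      (by norm_num [Prod.ext_iff]) (by norm_num [Prod.ext_iff])
      (by norm_num [Prod.ext_iff]) (by norm_num [Prod.ext_iff])
  have z12 : ⁅e 1, e 2⁆ = 0 := by
    refine h0 1 2 ?_
    rw [show root 1 + root 2 = (1:ℝ) • α + (2:ℝ) • β from by
      rw [hroot]; show β + (α + β) = _; module]
    exact hnr 1 2 (by norm_num [Prod.ext_iff]) (by norm_num [Prod.ext_iff])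
      (by norm_num [Prod.ext_iff]) (by norm_num [Prod.ext_iff])
      (by norm_num [Prod.ext_iff]) (by norm_num [Prod.ext_iff])
  have z13 : ⁅e 1, e 3⁆ = 0 := by
    refine h0 1 3 ?_
    rw [show root 1 + root 3 = (2:ℝ) • α + (2:ℝ) • β from by
      rw [hroot]; show β + ((2:ℝ) • α + β) = _; module]
    exact hnr 2 2 (by norm_num [Prod.ext_iff]) (by norm_num [Prod.ext_iff])
      (by norm_num [Prod.ext_iff]) (by norm_num [Prod.ext_iff])
      (by norm_num [Prod.ext_iff]) (by norm_num [Prod.ext_iff])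
  have z15 : ⁅e 1, e 5⁆ = 0 := by
    refine h0 1 5 ?_
    rw [show root 1 + root 5 = (3:ℝ) • α + (3:ℝ) • β from by
      rw [hroot]; show β + ((3:ℝ) • α + (2:ℝ) • β) = _; module]
    exact hnr 3 3 (by norm_num [Prod.ext_iff]) (by norm_num [Prod.ext_iff])
      (by norm_num [Prod.ext_iff]) (by norm_num [Prod.ext_iff])
      (by norm_num [Prod.ext_iff]) (by norm_num [Prod.ext_iff])
  have z24 : ⁅e 2, e 4⁆ = 0 := by
    refine h0 2 4 ?_
    rw [show root 2 + root 4 = (4:ℝ) • α + (2:ℝ) • β from by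
      rw [hroot]; show (α + β) + ((3:ℝ) • α + β) = _; module]
    exact hnr 4 2 (by norm_num [Prod.ext_iff]) (by norm_num [Prod.ext_iff])
      (by norm_num [Prod.ext_iff]) (by norm_num [Prod.ext_iff])
      (by norm_num [Prod.ext_iff]) (by norm_num [Prod.ext_iff])
  have z25 : ⁅e 2, e 5⁆ = 0 := by
    refine h0 2 5 ?_
    rw [show root 2 + root 5 = (4:ℝ) • α + (3:ℝ) • β from by
      rw [hroot]; show (α + β) + ((3:ℝ) • α + (2:ℝ) • β) = _; module]
    exact hnr 4 3 (by norm_num [Prod.ext_iff]) (by norm_num [Prod.ext_iff])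
      (by norm_num [Prod.ext_iff]) (by norm_num [Prod.ext_iff])
      (by norm_num [Prod.ext_iff]) (by norm_num [Prod.ext_iff])
  have z34 : ⁅e 3, e 4⁆ = 0 := by
    refine h0 3 4 ?_
    rw [show root 3 + root 4 = (5:ℝ) • α + (2:ℝ) • β from by
      rw [hroot]; show ((2:ℝ) • α + β) + ((3:ℝ) • α + β) = _; module]
    exact hnr 5 2 (by norm_num [Prod.ext_iff]) (by norm_num [Prod.ext_iff])
      (by norm_num [Prod.ext_iff]) (by norm_num [Prod.ext_iff])
      (by norm_num [Prod.ext_iff]) (by norm_num [Prod.ext_iff])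
  have z35 : ⁅e 3, e 5⁆ = 0 := by
    refine h0 3 5 ?_
    rw [show root 3 + root 5 = (5:ℝ) • α + (3:ℝ) • β from by
      rw [hroot]; show ((2:ℝ) • α + β) + ((3:ℝ) • α + (2:ℝ) • β) = _; module]
    exact hnr 5 3 (by norm_num [Prod.ext_iff]) (by norm_num [Prod.ext_iff])
      (by norm_num [Prod.ext_iff]) (by norm_num [Prod.ext_iff])
      (by norm_num [Prod.ext_iff]) (by norm_num [Prod.ext_iff])
  have z45 : ⁅e 4, e 5⁆ = 0 := by
    refine h0 4 5 ?_
    rw [show root 4 + root 5 = (6:ℝ) • α + (3:ℝ) • β from by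
      rw [hroot]; show ((3:ℝ) • α + β) + ((3:ℝ) • α + (2:ℝ) • β) = _; module]
    exact hnr 6 3 (by norm_num [Prod.ext_iff]) (by norm_num [Prod.ext_iff])
      (by norm_num [Prod.ext_iff]) (by norm_num [Prod.ext_iff])
      (by norm_num [Prod.ext_iff]) (by norm_num [Prod.ext_iff])
  exact ⟨z04, z05, z12, z13, z15, z24, z25, z34, z35, z45⟩

theorem stmt6 {n : Type*} [LieRing n] [LieAlgebra ℂ n]
    (α β : EuclideanSpace ℝ (Fin 2))
    (hαα : ⟪α, α⟫ = 1) (hββ : ⟪β, β⟫ = 3) (hαβ : ⟪α, β⟫ = -(3/2))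
    -- the six positive roots of `G₂`: `α, β, α+β, 2α+β, 3α+β, 3α+2β`, indexed by `Fin 6`
    (root : Fin 6 → EuclideanSpace ℝ (Fin 2))
    (hroot : root = ![α, β, α + β, (2:ℝ) • α + β, (3:ℝ) • α + β, (3:ℝ) • α + (2:ℝ) • β])
    (c₁ c₂ c₃ c₄ c₅ : ℂ)
    (hc₁ : c₁ ≠ 0) (hc₂ : c₂ ≠ 0) (hc₃ : c₃ ≠ 0) (hc₄ : c₄ ≠ 0) (hc₅ : c₅ ≠ 0)
    (e : Module.Basis (Fin 6) ℂ n)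
    (h01 : ⁅e 0, e 1⁆ = c₁ • e 2)
    (h02 : ⁅e 0, e 2⁆ = c₂ • e 3)
    (h03 : ⁅e 0, e 3⁆ = c₃ • e 4)
    (h41 : ⁅e 4, e 1⁆ = c₄ • e 5)
    (h23 : ⁅e 2, e 3⁆ = c₅ • e 5)
    (h0 : ∀ i j : Fin 6, root i + root j ∉ Set.range root → ⁅e i, e j⁆ = 0)
    (hnil : ∀ x : n, IsNilpotent (LieAlgebra.ad ℂ n x))
    (ξ : Fin 6 → ℂ) (hξ₁ : ξ 1 ≠ 0) (hξ₄ : ξ 4 ≠ 0)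
    (lam : Module.Dual ℂ n) :
    lam ∈ basicSubvariety e {1, 4} ξ ↔
      (lam (e 4) = ξ 4 ∧ lam (e 5) = 0 ∧
        6 * c₃ ^ 2 * lam (e 1) * lam (e 4) ^ 2 - c₁ * c₂ * lam (e 3) ^ 3 =
          6 * c₃ ^ 2 * ξ 1 * ξ 4 ^ 2 ∧
        2 * c₃ * lam (e 2) * lam (e 4) - c₂ * lam (e 3) ^ 2 = 0) := by
  obtain ⟨z04, z05, z12, z13, z15, z24, z25, z34, z35, z45⟩ :=
    G2zeros α β hαα hββ hαβ root hroot e h0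
  obtain ⟨v10, v11, v12, v13, v14, v15, v40, v41, v42, v43, v44, v45⟩ :=
    G2vals c₁ c₂ c₃ c₄ c₅ e h01 h02 h03 h41 h23 z04 z05 z12 z13 z15 z24 z25 z34 z35 z45
  -- value lemmas for the singleton functionals
  have F1 : ∀ (x : n) (j : Fin 6),
      ((∑ i ∈ ({1} : Finset (Fin 6)), ξ i • e.coord i).comp
        (expNil (-(LieAlgebra.ad ℂ n x)))) (e j)
      = ξ 1 * e.repr (expNil (-(LieAlgebra.ad ℂ n x)) (e j)) 1 := by
    intro x j
    simp [Finset.sum_singleton, LinearMap.comp_apply, Module.Basis.coord_apply]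
  have F4 : ∀ (x : n) (j : Fin 6),
      ((∑ i ∈ ({4} : Finset (Fin 6)), ξ i • e.coord i).comp
        (expNil (-(LieAlgebra.ad ℂ n x)))) (e j)
      = ξ 4 * e.repr (expNil (-(LieAlgebra.ad ℂ n x)) (e j)) 4 := by
    intro x j
    simp [Finset.sum_singleton, LinearMap.comp_apply, Module.Basis.coord_apply]
  have hone4 : (1 : Fin 6) ∉ ({4} : Finset (Fin 6)) := by decide
  constructor
  · -- forward
    rintro ⟨μ, hμ, rfl⟩
    obtain ⟨x, hx⟩ := hμ 1 (by decide)
    obtain ⟨y, hy⟩ := hμ 4 (by decide)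
    have hsum : ∀ j : Fin 6, (∑ i ∈ ({1,4} : Finset (Fin 6)), μ i) (e j)
        = μ 1 (e j) + μ 4 (e j) := by
      intro j
      rw [Finset.sum_insert hone4, Finset.sum_singleton, LinearMap.add_apply]
    have m1 : ∀ j : Fin 6, μ 1 (e j)
        = ξ 1 * e.repr (expNil (-(LieAlgebra.ad ℂ n x)) (e j)) 1 := by
      intro j; rw [hx]; exact F1 x j
    have m4 : ∀ j : Fin 6, μ 4 (e j)
        = ξ 4 * e.repr (expNil (-(LieAlgebra.ad ℂ n y)) (e j)) 4 := by
      intro j; rw [hy]; exact F4 y j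
    refine ⟨?_, ?_, ?_, ?_⟩
    · rw [hsum 4, m1 4, m4 4, v14 x, v44 y]; ring
    · rw [hsum 5, m1 5, m4 5, v15 x, v45 y]; ring
    · rw [hsum 1, hsum 3, hsum 4, m1 1, m1 3, m1 4, m4 1, m4 3, m4 4,
        v11 x, v13 x, v14 x, v41 y, v43 y, v44 y]
      ring
    · rw [hsum 2, hsum 3, hsum 4, m1 2, m1 3, m1 4, m4 2, m4 3, m4 4,
        v12 x, v13 x, v14 x, v42 y, v43 y, v44 y]
      ring
  · -- backward
    rintro ⟨hl4, hl5, hcube, hquad⟩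
    have hcξ : c₃ * ξ 4 ≠ 0 := mul_ne_zero hc₃ hξ₄
    obtain ⟨t, ht⟩ : ∃ t : ℂ, c₃ * ξ 4 * t = -(lam (e 3)) :=
      ⟨-(lam (e 3)) / (c₃ * ξ 4), by field_simp <;> ring⟩
    obtain ⟨s, hs⟩ : ∃ s : ℂ, c₃ * ξ 4 * s = lam (e 0) :=
      ⟨lam (e 0) / (c₃ * ξ 4), by field_simp <;> ring⟩
    set x4 : n := t • e 0 + s • e 3 with hx4
    have hr0 : e.repr x4 0 = t := by
      simp [hx4, map_add, map_smul, Module.Basis.repr_self, Finsupp.single_apply]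
    have hr1 : e.repr x4 1 = 0 := by
      simp [hx4, map_add, map_smul, Module.Basis.repr_self, Finsupp.single_apply]
    have hr2 : e.repr x4 2 = 0 := by
      simp [hx4, map_add, map_smul, Module.Basis.repr_self, Finsupp.single_apply]
    have hr3 : e.repr x4 3 = s := by
      simp [hx4, map_add, map_smul, Module.Basis.repr_self, Finsupp.single_apply]
    obtain ⟨P, hP⟩ : ∃ P : Module.Dual ℂ n,
        P = (∑ i ∈ ({1} : Finset (Fin 6)), ξ i • e.coord i).comp
          (expNil (-(LieAlgebra.ad ℂ n (0:n)))) := ⟨_, rfl⟩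
    obtain ⟨Q, hQ⟩ : ∃ Q : Module.Dual ℂ n,
        Q = (∑ i ∈ ({4} : Finset (Fin 6)), ξ i • e.coord i).comp
          (expNil (-(LieAlgebra.ad ℂ n x4))) := ⟨_, rfl⟩
    refine ⟨![0, P, 0, 0, Q, 0], ?_, ?_⟩
    · intro i hi
      fin_cases hi
      · exact ⟨(0:n), hP⟩
      · exact ⟨x4, hQ⟩
    · have hsum : (∑ i ∈ ({1,4} : Finset (Fin 6)),
          (![0, P, 0, 0, Q, 0] : Fin 6 → Module.Dual ℂ n) i) = P + Q := by
        rw [Finset.sum_insert hone4, Finset.sum_singleton]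
        rfl
      rw [hsum]
      refine e.ext fun j => ?_
      rw [LinearMap.add_apply, hP, hQ, F1 _ j, F4 _ j]
      fin_cases j
      · rw [show e (⟨0, by norm_num⟩ : Fin 6) = e 0 from rfl, v10 (0:n), v40 x4,
          hr0, hr1, hr2, hr3]
        linear_combination -hs
      · rw [show e (⟨1, by norm_num⟩ : Fin 6) = e 1 from rfl, v11 (0:n), v41 x4, hr0]
        rw [hl4] at hcube
        have h6 : (6:ℂ) * (c₃^2 * ξ 4^2) ≠ 0 :=
          mul_ne_zero (by norm_num) (mul_ne_zero (pow_ne_zero 2 hc₃) (pow_ne_zero 2 hξ₄))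
        apply mul_left_cancel₀ h6
        linear_combination hcube + (c₁*c₂*((c₃*ξ 4*t)^2 - (c₃*ξ 4*t)*(lam (e 3)) + (lam (e 3))^2)) * ht
      · rw [show e (⟨2, by norm_num⟩ : Fin 6) = e 2 from rfl, v12 (0:n), v42 x4, hr0]
        rw [hl4] at hquad
        have h2 : (2:ℂ) * (c₃ * ξ 4) ≠ 0 := mul_ne_zero (by norm_num) hcξ
        apply mul_left_cancel₀ h2
        linear_combination hquad - (c₂*((c₃*ξ 4*t) - (lam (e 3)))) * ht
      · rw [show e (⟨3, by norm_num⟩ : Fin 6) = e 3 from rfl, v13 (0:n), v43 x4, hr0]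
        linear_combination ht
      · rw [show e (⟨4, by norm_num⟩ : Fin 6) = e 4 from rfl, v14 (0:n), v44 x4]
        linear_combination hl4
      · rw [show e (⟨5, by norm_num⟩ : Fin 6) = e 5 from rfl, v15 (0:n), v45 x4]
        linear_combination hl5
end

section
/- Let D={α+β, 3α+β} and let ξ:D→ℂ∖{0} be a map. A linear form λ∈𝔫* belongs to the basic subvariety 𝒪_{D,ξ} if and only if λ_{3α+β}=ξ(3α+β), λ_{3α+2β}=0, and 2c₃λ_{α+β}λ_{3α+β} − c₂λ_{2α+β}² = 2c₃ξ(α+β)ξ(3α+β) (with λ_α and λ_β arbitrary). -/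
open scoped RealInnerProductSpace

lemma expNil_eq_sum {M : Type*} [AddCommGroup M] [Module ℂ M] (A : Module.End ℂ M)
    (hA : A ^ 5 = 0) :
    expNil A = ∑ k ∈ Finset.range 5, (k.factorial : ℂ)⁻¹ • A ^ k := by
  have hle : nilpotencyClass A ≤ 5 := Nat.sInf_le hA
  unfold expNil
  refine Finset.sum_subset (Finset.range_subset_range.2 hle) ?_
  intro k _ hk
  have hk' : nilpotencyClass A ≤ k := Nat.le_of_not_lt (by simpa using hk)
  have hz : A ^ k = 0 := by
    have : A ^ k = A ^ nilpotencyClass A * A ^ (k - nilpotencyClass A) := by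
      rw [← pow_add, Nat.add_sub_cancel' hk']
    rw [this, pow_nilpotencyClass ⟨5, hA⟩, zero_mul]
  simp [hz]

set_option maxHeartbeats 1000000 in
theorem stmt7 {n : Type*} [LieRing n] [LieAlgebra ℂ n]
    (α β : EuclideanSpace ℝ (Fin 2))
    (hαα : ⟪α, α⟫ = 1) (hββ : ⟪β, β⟫ = 3) (hαβ : ⟪α, β⟫ = -(3/2))
    -- the six positive roots of `G₂`: `α, β, α+β, 2α+β, 3α+β, 3α+2β`, indexed by `Fin 6`
    (root : Fin 6 → EuclideanSpace ℝ (Fin 2))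
    (hroot : root = ![α, β, α + β, (2:ℝ) • α + β, (3:ℝ) • α + β, (3:ℝ) • α + (2:ℝ) • β])
    (c₁ c₂ c₃ c₄ c₅ : ℂ)
    (hc₁ : c₁ ≠ 0) (hc₂ : c₂ ≠ 0) (hc₃ : c₃ ≠ 0) (hc₄ : c₄ ≠ 0) (hc₅ : c₅ ≠ 0)
    (e : Module.Basis (Fin 6) ℂ n)
    (h01 : ⁅e 0, e 1⁆ = c₁ • e 2)
    (h02 : ⁅e 0, e 2⁆ = c₂ • e 3)
    (h03 : ⁅e 0, e 3⁆ = c₃ • e 4)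
    (h41 : ⁅e 4, e 1⁆ = c₄ • e 5)
    (h23 : ⁅e 2, e 3⁆ = c₅ • e 5)
    (h0 : ∀ i j : Fin 6, root i + root j ∉ Set.range root → ⁅e i, e j⁆ = 0)
    (hnil : ∀ x : n, IsNilpotent (LieAlgebra.ad ℂ n x))
    (ξ : Fin 6 → ℂ) (hξ₂ : ξ 2 ≠ 0) (hξ₄ : ξ 4 ≠ 0)
    (lam : Module.Dual ℂ n) :
    lam ∈ basicSubvariety e {2, 4} ξ ↔
      (lam (e 4) = ξ 4 ∧ lam (e 5) = 0 ∧
        2 * c₃ * lam (e 2) * lam (e 4) - c₂ * lam (e 3) ^ 2 = 2 * c₃ * ξ 2 * ξ 4) := by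
  -- inner products of the roots with α and β
  have hba : ⟪β, α⟫ = -(3/2) := by rw [real_inner_comm]; exact hαβ
  have r0 : root 0 = α := by rw [hroot]; rfl
  have r1 : root 1 = β := by rw [hroot]; rfl
  have r2 : root 2 = α + β := by rw [hroot]; rfl
  have r3 : root 3 = (2:ℝ) • α + β := by rw [hroot]; rfl
  have r4 : root 4 = (3:ℝ) • α + β := by rw [hroot]; rfl
  have r5 : root 5 = (3:ℝ) • α + (2:ℝ) • β := by rw [hroot]; rfl
  have i0a : ⟪root 0, α⟫ = 1 := by rw [r0, hαα]
  have i1a : ⟪root 1, α⟫ = -(3/2) := by rw [r1, hba]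
  have i2a : ⟪root 2, α⟫ = -(1/2) := by rw [r2, inner_add_left, hαα, hba]; norm_num
  have i3a : ⟪root 3, α⟫ = 1/2 := by
    rw [r3, inner_add_left, real_inner_smul_left, hαα, hba]; norm_num
  have i4a : ⟪root 4, α⟫ = 3/2 := by
    rw [r4, inner_add_left, real_inner_smul_left, hαα, hba]; norm_num
  have i5a : ⟪root 5, α⟫ = 0 := by
    rw [r5, inner_add_left, real_inner_smul_left, real_inner_smul_left, hαα, hba]; norm_num
  have i0b : ⟪root 0, β⟫ = -(3/2) := by rw [r0, hαβ]
  have i1b : ⟪root 1, β⟫ = 3 := by rw [r1, hββ]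
  have i2b : ⟪root 2, β⟫ = 3/2 := by rw [r2, inner_add_left, hαβ, hββ]; norm_num
  have i3b : ⟪root 3, β⟫ = 0 := by
    rw [r3, inner_add_left, real_inner_smul_left, hαβ, hββ]; norm_num
  have i4b : ⟪root 4, β⟫ = -(3/2) := by
    rw [r4, inner_add_left, real_inner_smul_left, hαβ, hββ]; norm_num
  have i5b : ⟪root 5, β⟫ = 3/2 := by
    rw [r5, inner_add_left, real_inner_smul_left, real_inner_smul_left, hαβ, hββ]; norm_num
  have P : ∀ k : Fin 6,
      (⟪root k, α⟫ = 1 ∧ ⟪root k, β⟫ = -(3/2)) ∨ (⟪root k, α⟫ = -(3/2) ∧ ⟪root k, β⟫ = 3) ∨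
      (⟪root k, α⟫ = -(1/2) ∧ ⟪root k, β⟫ = 3/2) ∨ (⟪root k, α⟫ = 1/2 ∧ ⟪root k, β⟫ = 0) ∨
      (⟪root k, α⟫ = 3/2 ∧ ⟪root k, β⟫ = -(3/2)) ∨ (⟪root k, α⟫ = 0 ∧ ⟪root k, β⟫ = 3/2) := by
    intro k
    fin_cases k
    · exact Or.inl ⟨i0a, i0b⟩
    · exact Or.inr (Or.inl ⟨i1a, i1b⟩)
    · exact Or.inr (Or.inr (Or.inl ⟨i2a, i2b⟩))
    · exact Or.inr (Or.inr (Or.inr (Or.inl ⟨i3a, i3b⟩)))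
    · exact Or.inr (Or.inr (Or.inr (Or.inr (Or.inl ⟨i4a, i4b⟩))))
    · exact Or.inr (Or.inr (Or.inr (Or.inr (Or.inr ⟨i5a, i5b⟩))))
  have zkey : ∀ p q : Fin 6, ∀ va vb : ℝ,
      ⟪root p, α⟫ + ⟪root q, α⟫ = va → ⟪root p, β⟫ + ⟪root q, β⟫ = vb →
      ¬(va = 1 ∧ vb = -(3/2) ∨ va = -(3/2) ∧ vb = 3 ∨ va = -(1/2) ∧ vb = 3/2 ∨
        va = 1/2 ∧ vb = 0 ∨ va = 3/2 ∧ vb = -(3/2) ∨ va = 0 ∧ vb = 3/2) →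
      ⁅e p, e q⁆ = 0 := by
    intro p q va vb ha hb hno
    apply h0
    rintro ⟨k, hk⟩
    have hka : ⟪root k, α⟫ = va := by rw [hk, inner_add_left, ha]
    have hkb : ⟪root k, β⟫ = vb := by rw [hk, inner_add_left, hb]
    have hP := P k
    rw [hka, hkb] at hP
    exact hno hP
  have z40 : ⁅e 4, e 0⁆ = 0 :=
    zkey 4 0 (5/2) (-3) (by rw [i0a, i4a]; norm_num) (by rw [i0b, i4b]; norm_num) (by norm_num)
  have z50 : ⁅e 5, e 0⁆ = 0 :=
    zkey 5 0 1 0 (by rw [i0a, i5a]; norm_num) (by rw [i0b, i5b]; norm_num) (by norm_num)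
  have z21 : ⁅e 2, e 1⁆ = 0 :=
    zkey 2 1 (-2) (9/2) (by rw [i1a, i2a]; norm_num) (by rw [i1b, i2b]; norm_num) (by norm_num)
  have z31 : ⁅e 3, e 1⁆ = 0 :=
    zkey 3 1 (-1) 3 (by rw [i1a, i3a]; norm_num) (by rw [i1b, i3b]; norm_num) (by norm_num)
  have z51 : ⁅e 5, e 1⁆ = 0 :=
    zkey 5 1 (-(3/2)) (9/2) (by rw [i1a, i5a]; norm_num) (by rw [i1b, i5b]; norm_num) (by norm_num)
  have z12 : ⁅e 1, e 2⁆ = 0 :=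
    zkey 1 2 (-2) (9/2) (by rw [i1a, i2a]; norm_num) (by rw [i1b, i2b]; norm_num) (by norm_num)
  have z42 : ⁅e 4, e 2⁆ = 0 :=
    zkey 4 2 1 0 (by rw [i2a, i4a]; norm_num) (by rw [i2b, i4b]; norm_num) (by norm_num)
  have z52 : ⁅e 5, e 2⁆ = 0 :=
    zkey 5 2 (-(1/2)) 3 (by rw [i2a, i5a]; norm_num) (by rw [i2b, i5b]; norm_num) (by norm_num)
  have z13 : ⁅e 1, e 3⁆ = 0 :=
    zkey 1 3 (-1) 3 (by rw [i1a, i3a]; norm_num) (by rw [i1b, i3b]; norm_num) (by norm_num)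
  have z43 : ⁅e 4, e 3⁆ = 0 :=
    zkey 4 3 2 (-(3/2)) (by rw [i3a, i4a]; norm_num) (by rw [i3b, i4b]; norm_num) (by norm_num)
  have z53 : ⁅e 5, e 3⁆ = 0 :=
    zkey 5 3 (1/2) (3/2) (by rw [i3a, i5a]; norm_num) (by rw [i3b, i5b]; norm_num) (by norm_num)
  have z04 : ⁅e 0, e 4⁆ = 0 :=
    zkey 0 4 (5/2) (-3) (by rw [i0a, i4a]; norm_num) (by rw [i0b, i4b]; norm_num) (by norm_num)
  have z24 : ⁅e 2, e 4⁆ = 0 :=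
    zkey 2 4 1 0 (by rw [i2a, i4a]; norm_num) (by rw [i2b, i4b]; norm_num) (by norm_num)
  have z34 : ⁅e 3, e 4⁆ = 0 :=
    zkey 3 4 2 (-(3/2)) (by rw [i3a, i4a]; norm_num) (by rw [i3b, i4b]; norm_num) (by norm_num)
  have z54 : ⁅e 5, e 4⁆ = 0 :=
    zkey 5 4 (3/2) 0 (by rw [i4a, i5a]; norm_num) (by rw [i4b, i5b]; norm_num) (by norm_num)
  have z05 : ⁅e 0, e 5⁆ = 0 :=
    zkey 0 5 1 0 (by rw [i0a, i5a]; norm_num) (by rw [i0b, i5b]; norm_num) (by norm_num)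
  have z15 : ⁅e 1, e 5⁆ = 0 :=
    zkey 1 5 (-(3/2)) (9/2) (by rw [i1a, i5a]; norm_num) (by rw [i1b, i5b]; norm_num) (by norm_num)
  have z25 : ⁅e 2, e 5⁆ = 0 :=
    zkey 2 5 (-(1/2)) 3 (by rw [i2a, i5a]; norm_num) (by rw [i2b, i5b]; norm_num) (by norm_num)
  have z35 : ⁅e 3, e 5⁆ = 0 :=
    zkey 3 5 (1/2) (3/2) (by rw [i3a, i5a]; norm_num) (by rw [i3b, i5b]; norm_num) (by norm_num)
  have z45 : ⁅e 4, e 5⁆ = 0 :=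
    zkey 4 5 (3/2) 0 (by rw [i4a, i5a]; norm_num) (by rw [i4b, i5b]; norm_num) (by norm_num)
  have h10 : ⁅e 1, e 0⁆ = -(c₁ • e 2) := by rw [← lie_skew, h01]
  have h20 : ⁅e 2, e 0⁆ = -(c₂ • e 3) := by rw [← lie_skew, h02]
  have h30 : ⁅e 3, e 0⁆ = -(c₃ • e 4) := by rw [← lie_skew, h03]
  have h14 : ⁅e 1, e 4⁆ = -(c₄ • e 5) := by rw [← lie_skew, h41]
  have h32 : ⁅e 3, e 2⁆ = -(c₅ • e 5) := by rw [← lie_skew, h23]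
  -- the action of `exp(-ad x)` on the basis
  have keyE : ∀ (x : n) (t : Fin 6 → ℂ), x = ∑ i, t i • e i →
      expNil (-(LieAlgebra.ad ℂ n x)) (e 0) =
        e 0 + (t 1 * c₁) • e 2 + (t 2 * c₂ - t 0 * t 1 * c₁ * c₂ / 2) • e 3
          + (t 3 * c₃ - t 0 * t 2 * c₂ * c₃ / 2 + t 0 ^ 2 * t 1 * c₁ * c₂ * c₃ / 6) • e 4
          + ((t 1 * t 3 * c₁ * c₅ - t 2 ^ 2 * c₂ * c₅ + t 1 * t 3 * c₃ * c₄) / 2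
             + (t 0 * t 1 * t 2 * c₁ * c₂ * c₅ - t 0 * t 1 * t 2 * c₂ * c₃ * c₄) / 6
             + t 0 ^ 2 * t 1 ^ 2 * c₁ * c₂ * c₃ * c₄ / 24) • e 5 ∧
      expNil (-(LieAlgebra.ad ℂ n x)) (e 1) =
        e 1 + (-(t 0 * c₁)) • e 2 + (t 0 ^ 2 * c₁ * c₂ / 2) • e 3
          + (-(t 0 ^ 3 * c₁ * c₂ * c₃) / 6) • e 4
          + (-(t 4 * c₄) - t 0 * t 3 * c₁ * c₅ / 2 - t 0 ^ 2 * t 2 * c₁ * c₂ * c₅ / 6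
             - t 0 ^ 3 * t 1 * c₁ * c₂ * c₃ * c₄ / 24) • e 5 ∧
      expNil (-(LieAlgebra.ad ℂ n x)) (e 2) =
        e 2 + (-(t 0 * c₂)) • e 3 + (t 0 ^ 2 * c₂ * c₃ / 2) • e 4
          + (t 3 * c₅ + t 0 * t 2 * c₂ * c₅ / 2 + t 0 ^ 2 * t 1 * c₂ * c₃ * c₄ / 6) • e 5 ∧
      expNil (-(LieAlgebra.ad ℂ n x)) (e 3) =
        e 3 + (-(t 0 * c₃)) • e 4 + (-(t 2 * c₅) - t 0 * t 1 * c₃ * c₄ / 2) • e 5 ∧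
      expNil (-(LieAlgebra.ad ℂ n x)) (e 4) = e 4 + (t 1 * c₄) • e 5 ∧
      expNil (-(LieAlgebra.ad ℂ n x)) (e 5) = e 5 := by
    intro x t hx
    set A : Module.End ℂ n := -(LieAlgebra.ad ℂ n x) with hAdef
    have adx : ∀ y : n, A y = -⁅x, y⁆ := fun y => rfl
    have a0 : A (e 0)
        = (t 1 * c₁) • e 2 + (t 2 * c₂) • e 3 + (t 3 * c₃) • e 4 := by
      rw [adx, hx, Fin.sum_univ_six]
      simp only [add_lie, smul_lie, lie_self, h10, h20, h30, z40, z50]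
      module
    have a1 : A (e 1) = (-(t 0 * c₁)) • e 2 + (-(t 4 * c₄)) • e 5 := by
      rw [adx, hx, Fin.sum_univ_six]
      simp only [add_lie, smul_lie, lie_self, h01, z21, z31, h41, z51]
      module
    have a2 : A (e 2) = (-(t 0 * c₂)) • e 3 + (t 3 * c₅) • e 5 := by
      rw [adx, hx, Fin.sum_univ_six]
      simp only [add_lie, smul_lie, lie_self, h02, z12, h32, z42, z52]
      module
    have a3 : A (e 3) = (-(t 0 * c₃)) • e 4 + (-(t 2 * c₅)) • e 5 := by
      rw [adx, hx, Fin.sum_univ_six]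
      simp only [add_lie, smul_lie, lie_self, h03, z13, h23, z43, z53]
      module
    have a4 : A (e 4) = (t 1 * c₄) • e 5 := by
      rw [adx, hx, Fin.sum_univ_six]
      simp only [add_lie, smul_lie, lie_self, z04, h14, z24, z34, z54]
      module
    have a5 : A (e 5) = 0 := by
      rw [adx, hx, Fin.sum_univ_six]
      simp only [add_lie, smul_lie, lie_self, z05, z15, z25, z35, z45]
      module
    have h5 : A ^ 5 = 0 := by
      apply Module.Basis.ext e
      intro j
      fin_cases j <;>
        simp [pow_succ, Module.End.mul_apply, a0, a1, a2, a3, a4, a5, map_add,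
          LinearMap.map_smul, smul_add, smul_smul, smul_zero, map_zero]
    have hsum : ∀ v : n, expNil A v =
        v + A v + (2:ℂ)⁻¹ • (A (A v)) + (6:ℂ)⁻¹ • (A (A (A v)))
        + (24:ℂ)⁻¹ • (A (A (A (A v)))) := by
      intro v
      rw [expNil_eq_sum _ h5]
      simp [Finset.sum_range_succ, pow_succ, Module.End.mul_apply, Nat.factorial]
      try norm_num
    refine ⟨?_, ?_, ?_, ?_, ?_, ?_⟩ <;>
    · rw [hsum]
      simp only [a0, a1, a2, a3, a4, a5, map_add, LinearMap.map_smul, map_smul, smul_add,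
        smul_smul, smul_zero, map_zero]
      match_scalars <;> ring
  -- the values of the linear forms in the two basic coadjoint orbits
  have key2 : ∀ (x : n) (t : Fin 6 → ℂ), x = ∑ i, t i • e i →
      ∀ g : Module.Dual ℂ n,
      g = (∑ i ∈ ({2} : Finset (Fin 6)), ξ i • e.coord i).comp
            (expNil (-(LieAlgebra.ad ℂ n x))) →
      g (e 0) = ξ 2 * (t 1 * c₁) ∧ g (e 1) = -(ξ 2 * (t 0 * c₁)) ∧ g (e 2) = ξ 2 ∧
      g (e 3) = 0 ∧ g (e 4) = 0 ∧ g (e 5) = 0 := by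
    intro x t hx g hg
    obtain ⟨E0, E1, E2, E3, E4, E5⟩ := keyE x t hx
    rw [Finset.sum_singleton] at hg
    refine ⟨?_, ?_, ?_, ?_, ?_, ?_⟩ <;>
    · rw [hg, LinearMap.comp_apply]
      first
      | rw [E0] | rw [E1] | rw [E2] | rw [E3] | rw [E4] | rw [E5]
      simp [Module.Basis.coord_apply, map_add, map_smul, Module.Basis.repr_self, Finsupp.single_apply]
      try ring
  have key4 : ∀ (x : n) (t : Fin 6 → ℂ), x = ∑ i, t i • e i →
      ∀ g : Module.Dual ℂ n,
      g = (∑ i ∈ ({4} : Finset (Fin 6)), ξ i • e.coord i).comp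
            (expNil (-(LieAlgebra.ad ℂ n x))) →
      g (e 0) = ξ 4 * (t 3 * c₃ - t 0 * t 2 * c₂ * c₃ / 2 + t 0 ^ 2 * t 1 * c₁ * c₂ * c₃ / 6) ∧
      g (e 1) = -(ξ 4 * (t 0 ^ 3 * c₁ * c₂ * c₃) / 6) ∧
      g (e 2) = ξ 4 * (t 0 ^ 2 * c₂ * c₃) / 2 ∧
      g (e 3) = -(ξ 4 * (t 0 * c₃)) ∧ g (e 4) = ξ 4 ∧ g (e 5) = 0 := by
    intro x t hx g hg
    obtain ⟨E0, E1, E2, E3, E4, E5⟩ := keyE x t hx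
    rw [Finset.sum_singleton] at hg
    refine ⟨?_, ?_, ?_, ?_, ?_, ?_⟩ <;>
    · rw [hg, LinearMap.comp_apply]
      first
      | rw [E0] | rw [E1] | rw [E2] | rw [E3] | rw [E4] | rw [E5]
      simp [Module.Basis.coord_apply, map_add, map_smul, Module.Basis.repr_self, Finsupp.single_apply]
      try ring
  constructor
  · -- forward direction
    rintro ⟨μ, hmem, hs⟩
    obtain ⟨x2, hx2⟩ := hmem 2 (by simp)
    obtain ⟨x4, hx4⟩ := hmem 4 (by simp)
    obtain ⟨k20, k21, k22, k23, k24, k25⟩ :=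
      key2 x2 (fun i => e.repr x2 i) (by simpa using (e.sum_repr x2).symm) (μ 2) hx2
    obtain ⟨k40, k41, k42, k43, k44, k45⟩ :=
      key4 x4 (fun i => e.repr x4 i) (by simpa using (e.sum_repr x4).symm) (μ 4) hx4
    have hl : ∀ v : n, lam v = μ 2 v + μ 4 v := by
      intro v
      rw [hs, Finset.sum_pair (by decide : (2 : Fin 6) ≠ 4)]
      rfl
    refine ⟨?_, ?_, ?_⟩
    · rw [hl, k24, k44, zero_add]
    · rw [hl, k25, k45, zero_add]
    · rw [hl, hl, hl, k22, k42, k23, k43, k24, k44]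
      ring
  · -- reverse direction
    rintro ⟨h4v, h5v, hrel⟩
    have hξc : ξ 4 * c₃ ≠ 0 := mul_ne_zero hξ₄ hc₃
    have hξc2 : ξ 2 * c₁ ≠ 0 := mul_ne_zero hξ₂ hc₁
    set s : ℂ := -(lam (e 3)) / (ξ 4 * c₃) with hsdef
    set μ4 : Module.Dual ℂ n := (∑ i ∈ ({4} : Finset (Fin 6)), ξ i • e.coord i).comp
      (expNil (-(LieAlgebra.ad ℂ n (s • e 0)))) with hμ4
    have hx4 : (s • e 0 : n) = ∑ i, (fun i : Fin 6 => if i = 0 then s else 0) i • e i := by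
      rw [Fin.sum_univ_six]; simp
    obtain ⟨k40, k41, k42, k43, k44, k45⟩ := key4 (s • e 0) _ hx4 μ4 hμ4
    have v40 : μ4 (e 0) = 0 := by rw [k40]; simp
    have v41 : μ4 (e 1) = -(ξ 4 * (s ^ 3 * c₁ * c₂ * c₃) / 6) := by rw [k41]; simp
    have v42 : μ4 (e 2) = ξ 4 * (s ^ 2 * c₂ * c₃) / 2 := by rw [k42]; simp
    have v43 : μ4 (e 3) = -(ξ 4 * (s * c₃)) := by rw [k43]; simp
    set b : ℂ := lam (e 0) / (ξ 2 * c₁) with hbdef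
    set a : ℂ := -((lam (e 1) + ξ 4 * (s ^ 3 * c₁ * c₂ * c₃) / 6) / (ξ 2 * c₁)) with hadef
    set μ2 : Module.Dual ℂ n := (∑ i ∈ ({2} : Finset (Fin 6)), ξ i • e.coord i).comp
      (expNil (-(LieAlgebra.ad ℂ n (a • e 0 + b • e 1)))) with hμ2
    have hx2 : (a • e 0 + b • e 1 : n) =
        ∑ i, (fun i : Fin 6 => if i = 0 then a else if i = 1 then b else 0) i • e i := by
      rw [Fin.sum_univ_six]; simp
    obtain ⟨k20, k21, k22, k23, k24, k25⟩ := key2 (a • e 0 + b • e 1) _ hx2 μ2 hμ2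
    have v20 : μ2 (e 0) = ξ 2 * (b * c₁) := by rw [k20]; simp
    have v21 : μ2 (e 1) = -(ξ 2 * (a * c₁)) := by rw [k21]; simp
    have hfin : lam = μ2 + μ4 := by
      apply Module.Basis.ext e
      intro j
      fin_cases j
      · show lam (e 0) = (μ2 + μ4) (e 0)
        rw [LinearMap.add_apply, v20, v40, hbdef]
        field_simp
        ring
      · show lam (e 1) = (μ2 + μ4) (e 1)
        rw [LinearMap.add_apply, v21, v41, hadef]
        field_simp
        ring
      · show lam (e 2) = (μ2 + μ4) (e 2)
        rw [LinearMap.add_apply, k22, v42, hsdef]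
        rw [h4v] at hrel
        field_simp
        ring_nf
        ring_nf at hrel
        linear_combination hrel
      · show lam (e 3) = (μ2 + μ4) (e 3)
        rw [LinearMap.add_apply, k23, v43, hsdef]
        field_simp
        ring
      · show lam (e 4) = (μ2 + μ4) (e 4)
        rw [LinearMap.add_apply, k24, k44, zero_add, h4v]
      · show lam (e 5) = (μ2 + μ4) (e 5)
        rw [LinearMap.add_apply, k25, k45, zero_add, h5v]
    refine ⟨fun i => if i = 2 then μ2 else μ4, ?_, ?_⟩
    · intro i hi
      fin_cases hi
      · show μ2 ∈ coadjointOrbit e {2} ξ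
        exact ⟨a • e 0 + b • e 1, hμ2⟩
      · show μ4 ∈ coadjointOrbit e {4} ξ
        exact ⟨s • e 0, hμ4⟩
    · rw [Finset.sum_pair (by decide : (2 : Fin 6) ≠ 4)]
      simpa using hfin
end
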